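/- arXiv:1212.2314 — 2 statements merged into one kernel-verified Lean document; each statement's English description precedes it below -/
import Mathlib

section
/- If Ha is a minimal tree projection of H1 w.r.t. H2, then nodes(Ha) = nodes(H1), i.e., minimal tree projections contain no nodes that do not occur in H1. -/
/-- A hypergraph, identified (as in the paper) with its finite set of
finite hyperedges; its nodes are the vertices occurring in some hyperedge. -/
structure FinHypergraph (α : Type*) where
  edges : Finset (Finset α)

namespace FinHypergraph

variable {α : Type*}

/-- The set of nodes of a hypergraph. -/
def nodes (H : FinHypergraph α) : Set α := {x | ∃ h ∈ H.edges, x ∈ h}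

/-- `H1 ≤ H2`: every hyperedge of `H1` is contained in some hyperedge of `H2`. -/
def HLe (H1 H2 : FinHypergraph α) : Prop := ∀ h1 ∈ H1.edges, ∃ h2 ∈ H2.edges, h1 ⊆ h2

/-- `H` is contained in `H'`. -/
def Contained (H H' : FinHypergraph α) : Prop :=
  ∀ h ∈ H.edges, h ∉ H'.edges → ∃ h' ∈ H'.edges, h' ∉ H.edges ∧ h ⊆ h'

/-- `H` is properly contained in `H'`. -/
def ProperlyContained (H H' : FinHypergraph α) : Prop := H.Contained H' ∧ H ≠ H'

/-- A hypergraph is reduced if no hyperedge is a proper subset of another one. -/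
def Reduced (H : FinHypergraph α) : Prop := ∀ h ∈ H.edges, ∀ h' ∈ H.edges, ¬ h ⊂ h'

end FinHypergraph

/-- The type of hyperedges of `H`. -/
abbrev Hyperedge {α : Type*} (H : FinHypergraph α) := {h : Finset α // h ∈ H.edges}

/-- A join tree for a hypergraph `H`: a tree whose vertices are the hyperedges of `H`
such that, for every node `X`, the hyperedges containing `X` induce a connected subtree. -/
structure JoinTree {α : Type*} (H : FinHypergraph α) where
  T : SimpleGraph (Hyperedge H)
  isTree : T.IsTree
  node_connected : ∀ X : α, (T.induce {h : Hyperedge H | X ∈ h.1}).Preconnected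

/-- A hypergraph is acyclic iff it has a join tree. -/
def FinHypergraph.Acyclic {α : Type*} (H : FinHypergraph α) : Prop := Nonempty (JoinTree H)

/-- `Ha` is a tree projection of `H1` w.r.t. `H2`. -/
def IsTreeProjection {α : Type*} (H1 H2 Ha : FinHypergraph α) : Prop :=
  Ha.Acyclic ∧ H1.HLe Ha ∧ Ha.HLe H2

/-- `Ha` is a minimal tree projection of `H1` w.r.t. `H2`. -/
def IsMinimalTreeProjection {α : Type*} (H1 H2 Ha : FinHypergraph α) : Prop :=
  IsTreeProjection H1 H2 Ha ∧
  ∀ Ha' : FinHypergraph α, IsTreeProjection H1 H2 Ha' → ¬ Ha'.ProperlyContained Ha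

namespace FinHypergraph

variable {α : Type*}

/-- `X` is `[V]`-adjacent to `Y`: some hyperedge contains both outside of `V`. -/
def Adj (H : FinHypergraph α) (V : Set α) (X Y : α) : Prop :=
  ∃ h ∈ H.edges, X ∈ h ∧ Y ∈ h ∧ X ∉ V ∧ Y ∉ V

/-- There is a `[V]`-path from `X` to `Y`. -/
def VPath (H : FinHypergraph α) (V : Set α) : α → α → Prop :=
  Relation.ReflTransGen (H.Adj V)

/-- The set `W` is `[V]`-connected. -/
def VConnected (H : FinHypergraph α) (V W : Set α) : Prop :=
  ∀ X ∈ W, ∀ Y ∈ W, H.VPath V X Y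

/-- `C` is a `[V]`-component of `H`: a maximal `[V]`-connected nonempty subset
of `nodes(H) \ V`. -/
def IsComponent (H : FinHypergraph α) (V C : Set α) : Prop :=
  C.Nonempty ∧ C ⊆ H.nodes \ V ∧ H.VConnected V C ∧
  ∀ C' : Set α, C ⊆ C' → C' ⊆ H.nodes \ V → H.VConnected V C' → C' = C

/-- The frontier `Fr(C,H)`: the union of all hyperedges meeting `C`. -/
def Fr (H : FinHypergraph α) (C : Set α) : Set α :=
  {x | ∃ h ∈ H.edges, x ∈ h ∧ ∃ y ∈ C, y ∈ h}

/-- The border `∂(C,H) = Fr(C,H) \ C`. -/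
def border (H : FinHypergraph α) (C : Set α) : Set α := H.Fr C \ C

/-- `X` `[V]`-touches the set `W`: `X` is `[∅]`-adjacent to some node `Z` from which
there is a `[V]`-path to some node of `W`. -/
def Touches (H : FinHypergraph α) (V : Set α) (X : α) (W : Set α) : Prop :=
  ∃ Z : α, H.Adj ∅ X Z ∧ ∃ Y ∈ W, H.VPath V Z Y

end FinHypergraph

namespace JoinTree

variable {α : Type*} {H : FinHypergraph α}

/-- The vertices of the subtree rooted at `h_s` when the join tree is rooted at
(the side of) `h_r`, for adjacent vertices `h_r`, `h_s`. -/
def subtreeVerts (JT : JoinTree H) (h_r h_s : Hyperedge H) : Set (Hyperedge H) :=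
  {v | JT.T.dist v h_s < JT.T.dist v h_r}

/-- The nodes occurring in the vertices of the subtree rooted at `h_s` (w.r.t. `h_r`). -/
def subtreeNodes (JT : JoinTree H) (h_r h_s : Hyperedge H) : Set α :=
  {x | ∃ v ∈ JT.subtreeVerts h_r h_s, x ∈ v.1}

/-- `h_s` is a child of `h_r` in the join tree rooted at `root`. -/
def IsChild (JT : JoinTree H) (root h_r h_s : Hyperedge H) : Prop :=
  JT.T.Adj h_r h_s ∧ JT.T.dist root h_r < JT.T.dist root h_s

end JoinTree

/-- The sub-hypergraph of `H1` induced by the node set `N` is `[∅]`-connected. -/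
def InducedConn {α : Type*} (H1 : FinHypergraph α) (N : Set α) : Prop :=
  ∀ X ∈ N, ∀ Y ∈ N,
    Relation.ReflTransGen
      (fun a b => a ∈ N ∧ b ∈ N ∧ ∃ h ∈ H1.edges, a ∈ h ∧ b ∈ h) X Y

/-- A join tree of `Ha` is `H1`-connected. -/
def JoinTree.IsConnectedFor {α : Type*} {Ha : FinHypergraph α} (JT : JoinTree Ha)
    (H1 : FinHypergraph α) : Prop :=
  ∀ h_r h_s : Hyperedge Ha, JT.T.Adj h_r h_s → InducedConn H1 (JT.subtreeNodes h_r h_s)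

/-- `C` is the component `C⊤(h)` associated with vertex `h` of the join tree rooted at
`root`: conventionally `nodes(H1)` for the root, and otherwise the unique
`[h_p]`-component of `H1` (for `h_p` the parent of `h`) determined by the subtree at `h`. -/
def CtopAt {α : Type*} (H1 : FinHypergraph α) {Ha : FinHypergraph α} (JT : JoinTree Ha)
    (root h : Hyperedge Ha) (C : Set α) : Prop :=
  (h = root ∧ C = H1.nodes) ∨
  ∃ h_p : Hyperedge Ha, JT.IsChild root h_p h ∧ H1.IsComponent (h_p.1 : Set α) C ∧
    JT.subtreeNodes h_p h = C ∪ ((h.1 : Set α) ∩ (h_p.1 : Set α))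

/-- The join tree `JT` of `Ha`, rooted at `root`, is an `H1`-component tree. -/
def JoinTree.IsComponentTreeFor {α : Type*} {Ha : FinHypergraph α} (JT : JoinTree Ha)
    (H1 : FinHypergraph α) (root : Hyperedge Ha) : Prop :=
  (∀ h_r h_s : Hyperedge Ha, JT.IsChild root h_r h_s →
    (∃! C : Set α, H1.IsComponent (h_r.1 : Set α) C ∧
      JT.subtreeNodes h_r h_s = C ∪ ((h_s.1 : Set α) ∩ (h_r.1 : Set α))) ∧
    (∀ C : Set α, H1.IsComponent (h_r.1 : Set α) C →
      JT.subtreeNodes h_r h_s = C ∪ ((h_s.1 : Set α) ∩ (h_r.1 : Set α)) →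
      ((h_s.1 : Set α) ∩ C).Nonempty ∧ (h_s.1 : Set α) ⊆ H1.Fr C)) ∧
  (∀ h_r : Hyperedge Ha, ∀ Ctop : Set α, CtopAt H1 JT root h_r Ctop →
    ∀ C_r : Set α, H1.IsComponent (h_r.1 : Set α) C_r → C_r ⊆ Ctop →
    ∃! h_s : Hyperedge Ha, JT.IsChild root h_r h_s ∧
      JT.subtreeNodes h_r h_s = C_r ∪ ((h_s.1 : Set α) ∩ (h_r.1 : Set α)))

/-! ### The Robber and Captain game -/

/-- A position for the Captain: a set of nodes included in some hyperedge of `H2`. -/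
def IsPosition {α : Type*} (H2 : FinHypergraph α) (M : Set α) : Prop :=
  ∃ h2 ∈ H2.edges, M ⊆ (h2 : Set α)

/-- A configuration of the game `R&C(H1,H2)`. -/
def IsConfig {α : Type*} (H1 H2 : FinHypergraph α) (M C : Set α) : Prop :=
  IsPosition H2 M ∧ (H1.IsComponent M C ∨ C = ∅ ∨ (M = ∅ ∧ C = H1.nodes))

/-- `C_j` is an `[(M_i,C_i),M_j]`-escape component: an `[M_j]`-component of `H1`
such that `C_i ∪ C_j` is `[M_i ∩ M_j]`-connected. -/
def EscapeComp {α : Type*} (H1 : FinHypergraph α) (M_i C_i M_j C_j : Set α) : Prop :=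
  H1.IsComponent M_j C_j ∧ H1.VConnected (M_i ∩ M_j) (C_i ∪ C_j)

/-- The escape door `ED((M_i,C),M') = ∂(C,H1) \ M'` (it only depends on `C` and `M'`). -/
def escapeDoor {α : Type*} (H1 : FinHypergraph α) (C M' : Set α) : Set α :=
  H1.border C \ M'

/-- `σ` is a strategy for the Captain in `R&C(H1,H2)`. -/
def IsStrategy {α : Type*} (H1 H2 : FinHypergraph α) (σ : Set α → Set α → Set α) : Prop :=
  ∀ M C : Set α, IsConfig H1 H2 M C → C ≠ ∅ →
    IsPosition H2 (σ M C) ∧ σ M C ⊆ H1.Fr C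

/-- One step of the game played according to `σ`: from configuration `p` the Captain
moves to `σ p.1 p.2`, and the Robber either selects an escape component or is captured. -/
def GameStep {α : Type*} (H1 : FinHypergraph α) (σ : Set α → Set α → Set α)
    (p q : Set α × Set α) : Prop :=
  p.2 ≠ ∅ ∧ q.1 = σ p.1 p.2 ∧
    (EscapeComp H1 p.1 p.2 q.1 q.2 ∨
      ((∀ C : Set α, ¬ EscapeComp H1 p.1 p.2 q.1 C) ∧ q.2 = ∅))

/-- `p` is a vertex of the game tree `T(σ)` (reachable from the root `(∅, nodes(H1))`). -/
def InGameTree {α : Type*} (H1 : FinHypergraph α) (σ : Set α → Set α → Set α)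
    (p : Set α × Set α) : Prop :=
  Relation.ReflTransGen (GameStep H1 σ) (∅, H1.nodes) p

/-- `σ` is winning: the game tree `T(σ)` is finite, i.e., there is no infinite play. -/
def Winning {α : Type*} (H1 : FinHypergraph α) (σ : Set α → Set α → Set α) : Prop :=
  ¬ ∃ f : ℕ → Set α × Set α, f 0 = (∅, H1.nodes) ∧ ∀ n, GameStep H1 σ (f n) (f (n + 1))

/-- `M_j` is a monotone move in `(M_i, C_i)`. -/
def MonotoneMove {α : Type*} (H1 : FinHypergraph α) (M_i C_i M_j : Set α) : Prop :=
  ∀ C : Set α, EscapeComp H1 M_i C_i M_j C → C ⊆ C_i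

/-- `σ` is a monotone strategy. -/
def MonotoneStrategy {α : Type*} (H1 : FinHypergraph α) (σ : Set α → Set α → Set α) : Prop :=
  ∀ p q : Set α × Set α, InGameTree H1 σ p → GameStep H1 σ p q →
    MonotoneMove H1 p.1 p.2 q.1




open Relation SimpleGraph

section Aux
variable {V : Type*} {G : SimpleGraph V}

lemma chain_of_walk {s : Set V} :
    ∀ (x y : s) (_ : (G.induce s).Walk x y),
      ReflTransGen (fun a b => a ∈ s ∧ b ∈ s ∧ G.Adj a b) x.1 y.1 := by
  intro x y w
  induction w with
  | nil => exact ReflTransGen.refl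
  | @cons a b c h p ih => exact ReflTransGen.head ⟨a.2, b.2, h⟩ ih

lemma preconnected_of_chains {s : Set V}
    (h : ∀ a ∈ s, ∀ b ∈ s, ReflTransGen (fun a b => a ∈ s ∧ b ∈ s ∧ G.Adj a b) a b) :
    (G.induce s).Preconnected := by
  have key : ∀ {a b : V}, ReflTransGen (fun a b => a ∈ s ∧ b ∈ s ∧ G.Adj a b) a b →
      ∀ (ha : a ∈ s) (hb : b ∈ s), (G.induce s).Reachable ⟨a, ha⟩ ⟨b, hb⟩ := by
    intro a b hab
    induction hab with
    | refl => intro ha hb; exact Reachable.refl _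
    | @tail c d h' step ih =>
        intro ha hd
        exact (ih ha step.1).trans (SimpleGraph.Adj.reachable (by exact step.2.2))
  rintro ⟨a, ha⟩ ⟨b, hb⟩
  exact key (h a ha b hb) ha hb

lemma exists_walk_of_chain {P : V → Prop} {a b : V} (ha : P a)
    (h : ReflTransGen (fun x y => P x ∧ P y ∧ G.Adj x y) a b) :
    ∃ w : G.Walk a b, ∀ v ∈ w.support, P v := by
  induction h with
  | refl => exact ⟨SimpleGraph.Walk.nil, by simp [ha]⟩
  | @tail c d h' step ih =>
      obtain ⟨w, hw⟩ := ih
      refine ⟨w.concat step.2.2, ?_⟩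
      intro v hv
      rw [SimpleGraph.Walk.support_concat] at hv
      rw [List.mem_append] at hv
      rcases hv with hv | hv
      · exact hw v hv
      · simp at hv; subst hv; exact step.2.1

end Aux


open Relation SimpleGraph

section Contract
variable {V : Type*}

/-- Contract vertex `u` into `v` (intended: `u, v` adjacent in a tree). -/
def contractG (T : SimpleGraph V) (u v : V) : SimpleGraph {w : V // w ≠ u} where
  Adj a b := a ≠ b ∧ (T.Adj a b ∨ (a.1 = v ∧ T.Adj u b) ∨ (b.1 = v ∧ T.Adj u a))
  symm := Std.Symm.mk <| by
    rintro a b ⟨hne, h⟩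
    refine ⟨hne.symm, ?_⟩
    rcases h with h | h | h
    · exact Or.inl h.symm
    · exact Or.inr (Or.inr h)
    · exact Or.inr (Or.inl h)
  loopless := ⟨by rintro a ⟨hne, -⟩; exact hne rfl⟩

variable {T : SimpleGraph V} {u v : V}

open Classical in
/-- The projection map. -/
noncomputable def projG (u v : V) (hvu : v ≠ u) (w : V) : {w : V // w ≠ u} :=
  if h : w = u then ⟨v, hvu⟩ else ⟨w, h⟩

lemma projG_val (hvu : v ≠ u) (w : {w : V // w ≠ u}) : projG u v hvu w.1 = w := by
  simp [projG, w.2]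

lemma projG_of_ne (hvu : v ≠ u) {w : V} (hw : w ≠ u) : (projG u v hvu w).1 = w := by
  simp [projG, hw]

lemma chain_contract (hvu : v ≠ u) (P : V → Prop) (hP : P u → P v) {a b : V}
    (h : ReflTransGen (fun x y => P x ∧ P y ∧ T.Adj x y) a b) :
    ReflTransGen (fun x y : {w : V // w ≠ u} =>
        P x.1 ∧ P y.1 ∧ (contractG T u v).Adj x y)
      (projG u v hvu a) (projG u v hvu b) := by
  have hPp : ∀ {w : V}, P w → P (projG u v hvu w).1 := by
    intro w hw
    by_cases h : w = u
    · subst h; simpa [projG] using hP hw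
    · simpa [projG, h] using hw
  induction h with
  | refl => rfl
  | @tail c d h' step ih =>
      by_cases he : projG u v hvu c = projG u v hvu d
      · rwa [he] at ih
      · refine ih.tail ⟨hPp step.1, hPp step.2.1, he, ?_⟩
        have hadj := step.2.2
        by_cases hc : c = u <;> by_cases hd : d = u
        · subst hc; subst hd; exact absurd hadj (T.loopless.irrefl _)
        · subst hc
          refine Or.inr (Or.inl ⟨by simp [projG], ?_⟩)
          rwa [projG_of_ne hvu hd]
        · subst hd
          refine Or.inr (Or.inr ⟨by simp [projG], ?_⟩)
          rw [projG_of_ne hvu hc]; exact hadj.symm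
        · exact Or.inl (by rw [projG_of_ne hvu hc, projG_of_ne hvu hd]; exact hadj)
      
end Contract

section ContractTree
variable {V : Type*} {T : SimpleGraph V} {u v : V}

lemma sym2_ne' {a b c d : V} (h1 : a ≠ c ∨ b ≠ d) (h2 : a ≠ d ∨ b ≠ c) :
    s(a, b) ≠ s(c, d) := by
  intro h
  rw [Sym2.eq_iff] at h
  rcases h with ⟨rfl, rfl⟩ | ⟨rfl, rfl⟩ <;> tauto

lemma contract_isTree (hT : T.IsTree) (huv : T.Adj u v) : (contractG T u v).IsTree := by
  have hvu : v ≠ u := huv.ne'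
  haveI : Nonempty {w : V // w ≠ u} := ⟨⟨v, hvu⟩⟩
  refine ⟨⟨fun a b => ?_⟩, ?_⟩
  · -- connected
      have hchain : ReflTransGen (fun x y => True ∧ True ∧ T.Adj x y) a.1 b.1 := by
        have := (reachable_iff_reflTransGen _ _).mp (hT.isConnected.preconnected a.1 b.1)
        exact ReflTransGen.mono (fun x y h => ⟨trivial, trivial, h⟩) _ _ this
      have := chain_contract hvu (fun _ => True) (fun _ => trivial) hchain
      rw [projG_val hvu, projG_val hvu] at this
      exact (reachable_iff_reflTransGen _ _).mpr (ReflTransGen.mono (fun x y h => h.2.2) _ _ this)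
  · -- acyclic
    have key : ∀ (E : Sym2 {w : V // w ≠ u}) (r' : V → V → Prop)
        (_ : ∀ x y : {w : V // w ≠ u}, (contractG T u v).Adj x y →
          s(x, y) ≠ E → ReflTransGen r' x.1 y.1),
        ∀ {x y : {w : V // w ≠ u}},
          ReflTransGen (contractG T u v \ fromEdgeSet {E}).Adj x y →
          ReflTransGen r' x.1 y.1 := by
      intro E r' hstep x y h
      induction h with
      | refl => rfl
      | @tail c d h' step ih =>
          rw [sdiff_adj, fromEdgeSet_adj] at step
          exact ih.trans (hstep _ _ step.1 (fun he => step.2 ⟨by simp [he], step.1.1⟩))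
    have hbridgeT : ∀ {x y : V}, T.Adj x y →
        ¬(T \ fromEdgeSet {s(x, y)}).Reachable x y := by
      intro x y hxy
      have := (isAcyclic_iff_forall_adj_isBridge.mp hT.IsAcyclic) hxy
      rw [isBridge_iff] at this
      exact this
    have toReach : ∀ {e : Sym2 V} {x y : V},
        ReflTransGen (fun p q => T.Adj p q ∧ s(p, q) ≠ e) x y →
        (T \ fromEdgeSet {e}).Reachable x y := by
      intro e x y h
      refine (reachable_iff_reflTransGen _ _).mpr (ReflTransGen.mono ?_ _ _ h)
      intro p q hpq
      rw [sdiff_adj, fromEdgeSet_adj]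
      exact ⟨hpq.1, fun hc => hpq.2 hc.1⟩
    rw [isAcyclic_iff_forall_adj_isBridge]
    intro a b hab
    rw [isBridge_iff]
    intro hreach
    by_cases hdir : T.Adj a.1 b.1
    · -- the contracted edge is an original edge
      refine hbridgeT hdir (toReach (key s(a, b) _ ?_
        ((reachable_iff_reflTransGen _ _).mp hreach)))
      rintro x y ⟨hxy, h | ⟨hxv, huy⟩ | ⟨hyv, hux⟩⟩ hne
      · refine ReflTransGen.single ⟨h, fun he => hne ?_⟩
        rw [Sym2.eq_iff] at he ⊢
        rcases he with ⟨h1, h2⟩ | ⟨h1, h2⟩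
        · exact Or.inl ⟨Subtype.ext h1, Subtype.ext h2⟩
        · exact Or.inr ⟨Subtype.ext h1, Subtype.ext h2⟩
      · exact ReflTransGen.head ⟨hxv ▸ huv.symm,
            sym2_ne' (Or.inr (Ne.symm b.2)) (Or.inr (Ne.symm a.2))⟩
          (ReflTransGen.single ⟨huy,
            sym2_ne' (Or.inl (Ne.symm a.2)) (Or.inl (Ne.symm b.2))⟩)
      · exact ReflTransGen.head ⟨hux.symm,
            sym2_ne' (Or.inr (Ne.symm b.2)) (Or.inr (Ne.symm a.2))⟩
          (ReflTransGen.single ⟨hyv ▸ huv,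
            sym2_ne' (Or.inl (Ne.symm a.2)) (Or.inl (Ne.symm b.2))⟩)
    · -- special edge
      have spec : ∀ (a' b' : {w : V // w ≠ u}), a' ≠ b' → a'.1 = v → T.Adj u b'.1 →
          (contractG T u v \ fromEdgeSet {s(a', b')}).Reachable a' b' → False := by
        intro a' b' hne' hav hub hreach'
        have hvb : v ≠ b'.1 := fun h => hne' (Subtype.ext (hav.trans h))
        have chain' : ReflTransGen (fun p q => T.Adj p q ∧ s(p, q) ≠ s(u, b'.1)) a'.1 b'.1 := by
          refine key s(a', b') _ ?_ ((reachable_iff_reflTransGen _ _).mp hreach')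
          rintro x y ⟨hxy, h | ⟨hxv, huy⟩ | ⟨hyv, hux⟩⟩ hnexy
          · exact ReflTransGen.single ⟨h, sym2_ne' (Or.inl x.2) (Or.inr y.2)⟩
          · have hyb : y.1 ≠ b'.1 := by
              intro h
              exact hnexy (by
                have hx : x = a' := Subtype.ext (hxv.trans hav.symm)
                have hy : y = b' := Subtype.ext h
                rw [hx, hy])
            exact ReflTransGen.head ⟨hxv ▸ huv.symm,
                sym2_ne' (Or.inl x.2) (Or.inl (by rw [hxv]; exact hvb))⟩
              (ReflTransGen.single ⟨huy, sym2_ne' (Or.inr hyb) (Or.inr y.2)⟩)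
          · have hxb : x.1 ≠ b'.1 := by
              intro h
              exact hnexy (by
                have hx : x = b' := Subtype.ext h
                have hy : y = a' := Subtype.ext (hyv.trans hav.symm)
                rw [hx, hy, Sym2.eq_swap])
            exact ReflTransGen.head ⟨hux.symm,
                sym2_ne' (Or.inl x.2) (Or.inl hxb)⟩
              (ReflTransGen.single ⟨hyv ▸ huv,
                sym2_ne' (Or.inr (by rw [hyv]; exact hvb)) (Or.inr y.2)⟩)
        have final : ReflTransGen (fun p q => T.Adj p q ∧ s(p, q) ≠ s(u, b'.1)) u b'.1 :=
          ReflTransGen.head ⟨huv, sym2_ne' (Or.inr hvb) (Or.inl (Ne.symm b'.2))⟩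
            (hav ▸ chain')
        exact hbridgeT hub (toReach final)
      rcases hab with ⟨hne', h | ⟨hav, hub⟩ | ⟨hbv, hua⟩⟩
      · exact hdir h
      · exact spec a b hne' hav hub hreach
      · refine spec b a hne'.symm hbv hua ?_
        rw [Sym2.eq_swap]
        exact hreach.symm

end ContractTree


section LemB
open Relation SimpleGraph
universe u
variable {α : Type u}

lemma lemB (Ha' : FinHypergraph α) :
    ∀ (n : ℕ) (β : Type u) (_ : Fintype β) (_ : Nonempty β) (T : SimpleGraph β)
      (ℓ : β → Finset α), Fintype.card β ≤ n → T.IsTree →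
      (∀ (X : α) (a b : β), X ∈ ℓ a → X ∈ ℓ b →
        ReflTransGen (fun x y => X ∈ ℓ x ∧ X ∈ ℓ y ∧ T.Adj x y) a b) →
      (∀ b, ∃ e ∈ Ha'.edges, ℓ b ⊆ e) →
      (∀ e ∈ Ha'.edges, ∃ b, ℓ b = e) →
      (∀ e ∈ Ha'.edges, ∀ e' ∈ Ha'.edges, e ⊆ e' → e = e') →
      Nonempty (JoinTree Ha') := by
  intro n
  induction n with
  | zero =>
      intro β _ _ T ℓ hcard _ _ _ _ _
      exact absurd hcard (by simp [Fintype.card_pos])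
  | succ n ih =>
      intro β _ _ T ℓ hcard hT hconn cover real anti
      classical
      by_cases hpair : ∃ u v : β, T.Adj u v ∧ ℓ u ⊆ ℓ v
      · obtain ⟨u, v, huv, hll⟩ := hpair
        haveI : Nonempty {w : β // w ≠ u} := ⟨⟨v, huv.ne'⟩⟩
        have hcard2 : Fintype.card {w : β // w ≠ u} ≤ n := by
          have h2 : Fintype.card {w : β // w ≠ u} < Fintype.card β :=
            Fintype.card_subtype_lt (x := u) (by simp)
          omega
        refine ih {w : β // w ≠ u} _ this (contractG T u v) (fun w => ℓ w.1) hcard2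
          (contract_isTree hT huv) ?_ (fun b => cover b.1) ?_ anti
        · intro X a b hXa hXb
          have h := chain_contract huv.ne' (fun w => X ∈ ℓ w) (fun h => hll h)
            (hconn X a.1 b.1 hXa hXb)
          rwa [projG_val, projG_val] at h
        · intro e he
          obtain ⟨b, hb⟩ := real e he
          by_cases hbu : b = u
          · subst hbu
            obtain ⟨e', he', hsub⟩ := cover v
            have hee : e = e' := anti e he e' he' (hb ▸ (hll.trans hsub))
            exact ⟨⟨v, huv.ne'⟩, Finset.Subset.antisymm (hee ▸ hsub) (hb ▸ hll)⟩
          · exact ⟨⟨b, hbu⟩, hb⟩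
      · push_neg at hpair
        have key : ∀ a b : β, a ≠ b → ¬ ℓ a ⊆ ℓ b := by
          intro a b hab hsub
          by_cases hemp : ∀ X, X ∉ ℓ a
          · obtain ⟨w⟩ := hT.isConnected.preconnected a b
            cases w with
            | nil => exact hab rfl
            | cons h p =>
                exact hpair _ _ h (fun X hX => absurd hX (hemp X))
          · push_neg at hemp
            obtain ⟨X0, hX0⟩ := hemp
            set p0 : T.Path a b := (hT.isConnected.preconnected a b).some.toPath with hp0
            have hsup : ∀ X ∈ ℓ a, ∀ w ∈ (p0 : T.Walk a b).support, X ∈ ℓ w := by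
              intro X hX w hw
              obtain ⟨wX, hwX⟩ := exists_walk_of_chain (P := fun w => X ∈ ℓ w) hX (hconn X a b hX (hsub hX))
              have hpeq : p0 = wX.toPath := hT.IsAcyclic.path_unique p0 wX.toPath
              refine hwX w ?_
              refine Walk.support_toPath_subset wX ?_
              rw [← hpeq]
              exact hw
            rcases hw : (p0 : T.Walk a b) with _ | ⟨hadj, q⟩
            · exact hab rfl
            · rename_i w
              refine hpair a w hadj ?_
              intro X hX
              refine hsup X hX w ?_
              rw [hw, Walk.support_cons]
              exact List.mem_cons_of_mem _ q.start_mem_support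
        have hmem : ∀ b, ℓ b ∈ Ha'.edges := by
          intro b
          obtain ⟨e, he, hsub⟩ := cover b
          obtain ⟨b', hb'⟩ := real e he
          by_cases hbb : b = b'
          · subst hbb; rw [hb']; exact he
          · exact absurd (hb' ▸ hsub) (key b b' hbb)
        let eβ : β ≃ Hyperedge Ha' :=
          Equiv.ofBijective (fun b => ⟨ℓ b, hmem b⟩)
            ⟨fun a b h => by
                by_contra hne
                exact key a b hne (le_of_eq (congrArg Subtype.val h)),
              fun e => by
                obtain ⟨b, hb⟩ := real e.1 e.2
                exact ⟨b, Subtype.ext hb⟩⟩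
        have heβ : ∀ b, (eβ b).1 = ℓ b := fun _ => rfl
        haveI : Nonempty (Hyperedge Ha') := Nonempty.map eβ ‹_›
        set T' : SimpleGraph (Hyperedge Ha') := SimpleGraph.comap (fun h => eβ.symm h) T
          with hT'
        have hadjT' : ∀ a b : β, T.Adj a b → T'.Adj (eβ a) (eβ b) := by
          intro a b h
          rw [hT']
          simpa using h
        refine ⟨⟨T', ⟨⟨fun h1 h2 => ?_⟩, fun h c hc => ?_⟩, fun X => ?_⟩⟩
        · -- preconnected
          have hr := (reachable_iff_reflTransGen _ _).mp
            (hT.isConnected.preconnected (eβ.symm h1) (eβ.symm h2))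
          have hl := ReflTransGen.lift (p := T'.Adj) (fun b => eβ b)
            (fun a b r => hadjT' a b r) _ _ hr
          simp only [Function.onFun, Equiv.apply_symm_apply] at hl
          exact (reachable_iff_reflTransGen _ _).mpr hl
        · -- acyclic
          have hcyc := (Walk.map_isCycle_iff_of_injective (f :=
            (⟨fun x => eβ.symm x, fun {a b} had => had⟩ : T' →g T))
            eβ.symm.injective).mpr hc
          exact hT.IsAcyclic _ hcyc
        · -- node connected
          apply preconnected_of_chains
          intro h1 hh1 h2 hh2
          have hX1 : X ∈ ℓ (eβ.symm h1) := by
            have := heβ (eβ.symm h1)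
            rw [Equiv.apply_symm_apply] at this
            rw [← this]; exact hh1
          have hX2 : X ∈ ℓ (eβ.symm h2) := by
            have := heβ (eβ.symm h2)
            rw [Equiv.apply_symm_apply] at this
            rw [← this]; exact hh2
          have hchain := hconn X _ _ hX1 hX2
          have hlift := ReflTransGen.lift
            (p := fun h h' : Hyperedge Ha' => h ∈ {h : Hyperedge Ha' | X ∈ h.1} ∧
              h' ∈ {h : Hyperedge Ha' | X ∈ h.1} ∧ T'.Adj h h')
            (fun b => eβ b)
            (fun a b r => ⟨r.1, r.2.1, hadjT' a b r.2.2⟩) _ _ hchain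
          simpa only [Function.onFun, Equiv.apply_symm_apply] using hlift

end LemB

theorem minimal_tp_nodes_eq {α : Type*} (H1 H2 Ha : FinHypergraph α)
    (hmin : IsMinimalTreeProjection H1 H2 Ha) : Ha.nodes = H1.nodes := by
  classical
  obtain ⟨⟨⟨JT⟩, hle1, hle2⟩, hminimal⟩ := hmin
  have hsub : H1.nodes ⊆ Ha.nodes := by
    rintro x ⟨h, hh, hx⟩
    obtain ⟨ha, hha, hs⟩ := hle1 h hh
    exact ⟨ha, hha, hs hx⟩
  refine Set.Subset.antisymm ?_ hsub
  by_contra hcon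
  rw [Set.not_subset] at hcon
  obtain ⟨x, hxHa, hxH1⟩ := hcon
  set f : Finset α → Finset α := fun h => h.filter (fun y => y ∈ H1.nodes) with hf
  set M : Finset (Finset α) := Ha.edges.image f with hM
  set E : Finset (Finset α) := M.filter (fun e => ∀ e' ∈ M, e ⊆ e' → e = e') with hE
  have hmax : ∀ m ∈ M, ∃ e ∈ E, m ⊆ e := by
    intro m hm
    have hne : (M.filter (fun e => m ⊆ e)).Nonempty := ⟨m, by simp [hm]⟩
    obtain ⟨e, he, hemax⟩ := Finset.exists_max_image _ (fun e => e.card) hne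
    rw [Finset.mem_filter] at he
    refine ⟨e, ?_, he.2⟩
    rw [hE, Finset.mem_filter]
    refine ⟨he.1, ?_⟩
    intro e' he' hsub'
    refine Finset.eq_of_subset_of_card_le hsub' (hemax e' ?_)
    rw [Finset.mem_filter]
    exact ⟨he', he.2.trans hsub'⟩
  have hEsub : ∀ e ∈ E, ∀ y ∈ e, y ∈ H1.nodes := by
    intro e he y hy
    rw [hE, Finset.mem_filter] at he
    obtain ⟨g, hg, rfl⟩ := Finset.mem_image.mp he.1
    exact (Finset.mem_filter.mp hy).2
  have hacyclic : FinHypergraph.Acyclic ⟨E⟩ := by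
    haveI : Nonempty (Hyperedge Ha) := JT.isTree.isConnected.nonempty
    refine lemB ⟨E⟩ (Fintype.card (Hyperedge Ha)) (Hyperedge Ha) _ ‹_› JT.T
      (fun h => f h.1) le_rfl JT.isTree ?_ ?_ ?_ ?_
    · intro X a b hXa hXb
      have hXS : X ∈ H1.nodes := (Finset.mem_filter.mp hXa).2
      have hXa' : X ∈ a.1 := (Finset.mem_filter.mp hXa).1
      have hXb' : X ∈ b.1 := (Finset.mem_filter.mp hXb).1
      have hchain := chain_of_walk (G := JT.T) (s := {h : Hyperedge Ha | X ∈ h.1})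
        ⟨a, hXa'⟩ ⟨b, hXb'⟩ (JT.node_connected X ⟨a, hXa'⟩ ⟨b, hXb'⟩).some
      refine ReflTransGen.mono ?_ _ _ hchain
      intro p q hpq
      exact ⟨Finset.mem_filter.mpr ⟨hpq.1, hXS⟩,
        Finset.mem_filter.mpr ⟨hpq.2.1, hXS⟩, hpq.2.2⟩
    · intro b
      exact hmax (f b.1) (Finset.mem_image_of_mem f b.2)
    · intro e he
      rw [show (FinHypergraph.mk E).edges = E from rfl, hE, Finset.mem_filter] at he
      obtain ⟨g, hg, hfg⟩ := Finset.mem_image.mp he.1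
      exact ⟨⟨g, hg⟩, hfg⟩
    · intro e he e' he' hsub'
      rw [show (FinHypergraph.mk E).edges = E from rfl, hE, Finset.mem_filter] at he
      exact he.2 e' (by rw [show (FinHypergraph.mk E).edges = E from rfl, hE,
        Finset.mem_filter] at he'; exact he'.1) hsub'
  have htp : IsTreeProjection H1 H2 ⟨E⟩ := by
    refine ⟨hacyclic, ?_, ?_⟩
    · intro h1 hh1
      obtain ⟨ha, hha, hs⟩ := hle1 h1 hh1
      have hsf : h1 ⊆ f ha := by
        intro y hy
        exact Finset.mem_filter.mpr ⟨hs hy, ⟨h1, hh1, hy⟩⟩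
      obtain ⟨e, he, hsub'⟩ := hmax (f ha) (Finset.mem_image_of_mem f hha)
      exact ⟨e, he, hsf.trans hsub'⟩
    · intro e he
      rw [show (FinHypergraph.mk E).edges = E from rfl, hE, Finset.mem_filter] at he
      obtain ⟨g, hg, rfl⟩ := Finset.mem_image.mp he.1
      obtain ⟨h2, hh2, hs⟩ := hle2 g hg
      exact ⟨h2, hh2, (Finset.filter_subset _ _).trans hs⟩
  have hpc : FinHypergraph.ProperlyContained ⟨E⟩ Ha := by
    constructor
    · intro h hh hnot
      have hh' : h ∈ E := hh
      rw [hE, Finset.mem_filter] at hh'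
      obtain ⟨g, hg, rfl⟩ := Finset.mem_image.mp hh'.1
      refine ⟨g, hg, ?_, Finset.filter_subset _ _⟩
      intro hgE
      have hfg : f g = g := Finset.filter_true_of_mem (fun y hy => hEsub g hgE y hy)
      rw [hfg] at hnot
      exact hnot hg
    · intro heq
      obtain ⟨h0, hh0, hxh0⟩ := hxHa
      have hh0' : h0 ∈ E := by
        have hEeq : E = Ha.edges := congrArg FinHypergraph.edges heq
        rw [hEeq]; exact hh0
      exact hxH1 (hEsub h0 hh0' x hxh0)
  exact hminimal ⟨E⟩ htp hpc
end

section
/- Let Ha be a reduced acyclic hypergraph. Then for any hyperedge h ∈ edges(Ha), there exists a join tree of Ha rooted at h that is an Ha-component tree. -/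
/-! ### Development: construction of a component tree -/

namespace CompTree

open FinHypergraph

variable {α : Type*} {Ha : FinHypergraph α}

lemma adj_symm (V : Set α) : Symmetric (Ha.Adj V) := by
  rintro x y ⟨h, hh, hx, hy, hxV, hyV⟩; exact ⟨h, hh, hy, hx, hyV, hxV⟩

lemma vpath_symm (V : Set α) : Symmetric (Ha.VPath V) :=
  fun a b h => by
    haveI : Std.Symm (Ha.Adj V) := ⟨adj_symm V⟩
    exact Relation.ReflTransGen.symmetric.symm a b h

lemma vpath_trans (V : Set α) {x y z : α} (h1 : Ha.VPath V x y) (h2 : Ha.VPath V y z) :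
    Ha.VPath V x z := Relation.ReflTransGen.trans h1 h2

lemma adj_mem_nodes {V : Set α} {x y : α} (h : Ha.Adj V x y) : y ∈ Ha.nodes ∧ y ∉ V := by
  obtain ⟨h, hh, hx, hy, hxV, hyV⟩ := h
  exact ⟨⟨h, hh, hy⟩, hyV⟩

/-- The `[V]`-component of the point `x`. -/
def _root_.FinHypergraph.compPt (Ha : FinHypergraph α) (V : Set α) (x : α) : Set α :=
  {y | (y ∈ Ha.nodes ∧ y ∉ V) ∧ Ha.VPath V x y}

lemma mem_compPt_self {V : Set α} {x : α} (hx : x ∈ Ha.nodes) (hxV : x ∉ V) :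
    x ∈ Ha.compPt V x := ⟨⟨hx, hxV⟩, Relation.ReflTransGen.refl⟩

lemma compPt_isComponent {V : Set α} {x : α} (hx : x ∈ Ha.nodes) (hxV : x ∉ V) :
    Ha.IsComponent V (Ha.compPt V x) := by
  refine ⟨⟨x, mem_compPt_self hx hxV⟩, ?_, ?_, ?_⟩
  · rintro y ⟨⟨hy, hyV⟩, -⟩; exact ⟨hy, hyV⟩
  · rintro y ⟨-, hy⟩ z ⟨-, hz⟩
    exact vpath_trans V (vpath_symm V hy) hz
  · intro C' hsub hsub' hconn
    refine le_antisymm ?_ hsub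
    intro y hy
    have hx' : x ∈ C' := hsub (mem_compPt_self hx hxV)
    exact ⟨hsub' hy, hconn x hx' y hy⟩

lemma isComponent_eq_compPt {V C : Set α} (hC : Ha.IsComponent V C) {x : α} (hx : x ∈ C) :
    C = Ha.compPt V x := by
  obtain ⟨hne, hsub, hconn, hmax⟩ := hC
  have hxn := hsub hx
  have h1 : C ⊆ Ha.compPt V x := fun y hy => ⟨hsub hy, hconn x hx y hy⟩
  have h2 := hmax (Ha.compPt V x) h1
    (fun y hy => hy.1)
    ((compPt_isComponent hxn.1 hxn.2).2.2.1)
  exact h2.symm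

lemma isComponent_unique {V C D : Set α} (hC : Ha.IsComponent V C) (hD : Ha.IsComponent V D)
    {x : α} (hxC : x ∈ C) (hxD : x ∈ D) : C = D := by
  rw [isComponent_eq_compPt hC hxC, isComponent_eq_compPt hD hxD]

lemma isComponent_disjoint_base {V C : Set α} (hC : Ha.IsComponent V C) :
    ∀ x ∈ C, x ∉ V := fun x hx => (hC.2.1 hx).2

lemma comp_closed_adj {V C : Set α} (hC : Ha.IsComponent V C) {x y : α}
    (hx : x ∈ C) (hxy : Ha.Adj V x y) : y ∈ C := by
  rw [isComponent_eq_compPt hC hx]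
  obtain ⟨hy, hyV⟩ := adj_mem_nodes hxy
  exact ⟨⟨hy, hyV⟩, Relation.ReflTransGen.single hxy⟩

lemma comp_closed_vpath {V C : Set α} (hC : Ha.IsComponent V C) {x y : α}
    (hx : x ∈ C) (hxy : Ha.VPath V x y) : y ∈ C := by
  induction hxy with
  | refl => exact hx
  | tail _ hadj ih => exact comp_closed_adj hC ih hadj

lemma edge_adj {V : Set α} {e : Finset α} (he : e ∈ Ha.edges) {x y : α}
    (hx : x ∈ e) (hy : y ∈ e) (hxV : x ∉ V) (hyV : y ∉ V) : Ha.Adj V x y :=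
  ⟨e, he, hx, hy, hxV, hyV⟩

lemma mem_nodes_of_mem_edge {e : Finset α} (he : e ∈ Ha.edges) {x : α} (hx : x ∈ e) :
    x ∈ Ha.nodes := ⟨e, he, hx⟩

/-- All the nodes of an edge outside `V` lie in one `[V]`-component. -/
lemma edge_diff_subset_comp {V C : Set α} (hC : Ha.IsComponent V C) {e : Finset α}
    (he : e ∈ Ha.edges) {x : α} (hx : x ∈ e) (hxV : x ∉ V) (hxC : x ∈ C) :
    ∀ y ∈ e, y ∉ V → y ∈ C := fun y hy hyV =>
  comp_closed_adj hC hxC (edge_adj he hx hy hxV hyV)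

lemma subset_fr {C : Set α} (h : C ⊆ Ha.nodes) : C ⊆ Ha.Fr C := by
  intro x hx
  obtain ⟨e, he, hxe⟩ := h hx
  exact ⟨e, he, hxe, x, hx, hxe⟩

lemma edge_subset_fr {C : Set α} {e : Finset α} (he : e ∈ Ha.edges)
    (hint : ((e : Set α) ∩ C).Nonempty) : (e : Set α) ⊆ Ha.Fr C := by
  obtain ⟨y, hy, hyC⟩ := hint
  exact fun x hx => ⟨e, he, hx, y, hyC, hy⟩

/-- The frontier of a component stays inside `C ∪ V`. -/
lemma fr_subset {V C : Set α} (hC : Ha.IsComponent V C) : Ha.Fr C ⊆ C ∪ V := by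
  rintro x ⟨e, he, hxe, y, hyC, hye⟩
  by_cases hxV : x ∈ V
  · exact Or.inr hxV
  · exact Or.inl (comp_closed_adj hC hyC
      (edge_adj he hye hxe (isComponent_disjoint_base hC y hyC) hxV))

lemma fr_eq {V C : Set α} (hC : Ha.IsComponent V C) : Ha.Fr C = C ∪ (Ha.Fr C ∩ V) := by
  apply le_antisymm
  · intro x hx
    rcases fr_subset hC hx with h | h
    · exact Or.inl h
    · exact Or.inr ⟨hx, h⟩
  · rintro x (hx | hx)
    · exact subset_fr (fun y hy => (hC.2.1 hy).1) hx
    · exact hx.1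

lemma nodes_finite (Ha : FinHypergraph α) : Ha.nodes.Finite := by
  have : Ha.nodes ⊆ ⋃ e ∈ (Ha.edges : Set (Finset α)), (e : Set α) := by
    rintro x ⟨e, he, hx⟩
    exact Set.mem_biUnion he hx
  exact Set.Finite.subset (Set.Finite.biUnion (Ha.edges.finite_toSet) (fun e _ => e.finite_toSet)) this

lemma comp_finite {V C : Set α} (hC : Ha.IsComponent V C) : C.Finite :=
  (nodes_finite Ha).subset (fun x hx => (hC.2.1 hx).1)

/-- In a reduced hypergraph, distinct edges have points outside each other. -/
lemma reduced_diff (hred : Ha.Reduced) {e f : Finset α} (he : e ∈ Ha.edges)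
    (hf : f ∈ Ha.edges) (hne : e ≠ f) : ∃ x ∈ e, x ∉ f := by
  by_contra hc
  push_neg at hc
  exact hred e he f hf (Finset.ssubset_iff_subset_ne.2 ⟨hc, hne⟩)


/-! #### Walks in the join tree and the interface lemma -/

section JoinTreeLemmas

variable (JT : JoinTree Ha)

/-- Reachability within a set of vertices of the join tree. -/
def ReachIn (s : Set (Hyperedge Ha)) (u v : Hyperedge Ha) : Prop :=
  ∃ w : JT.T.Walk u v, ∀ z ∈ w.support, z ∈ s

lemma reachIn_mono {s s' : Set (Hyperedge Ha)} (hss : s ⊆ s') {u v : Hyperedge Ha}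
    (h : ReachIn JT s u v) : ReachIn JT s' u v := by
  obtain ⟨w, hw⟩ := h
  exact ⟨w, fun z hz => hss (hw z hz)⟩

lemma reachIn_trans {s : Set (Hyperedge Ha)} {u v w : Hyperedge Ha}
    (h1 : ReachIn JT s u v) (h2 : ReachIn JT s v w) : ReachIn JT s u w := by
  obtain ⟨w1, hw1⟩ := h1
  obtain ⟨w2, hw2⟩ := h2
  refine ⟨w1.append w2, fun z hz => ?_⟩
  rw [SimpleGraph.Walk.mem_support_append_iff] at hz
  rcases hz with hz | hz
  · exact hw1 z hz
  · exact hw2 z hz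

/-- The inclusion homomorphism from an induced subgraph. -/
def inclHom (G : SimpleGraph (Hyperedge Ha)) (s : Set (Hyperedge Ha)) :
    G.induce s →g G where
  toFun := Subtype.val
  map_rel' := fun h => h

lemma reachIn_of_node (X : α) {u v : Hyperedge Ha} (hu : X ∈ u.1) (hv : X ∈ v.1) :
    ReachIn JT {z : Hyperedge Ha | X ∈ z.1} u v := by
  have hpre := JT.node_connected X
  have hr := hpre ⟨u, hu⟩ ⟨v, hv⟩
  obtain ⟨w⟩ := hr
  refine ⟨(w.map (inclHom JT.T _)).copy rfl rfl, fun z hz => ?_⟩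
  change z ∈ (w.map (inclHom JT.T {z : Hyperedge Ha | X ∈ z.1})).support at hz
  rw [SimpleGraph.Walk.support_map] at hz
  obtain ⟨z', _, rfl⟩ := List.mem_map.1 hz
  exact z'.2

/-- The set of hyperedges meeting a `[V]`-component is `ReachIn`-connected. -/
lemma reachIn_comp_aux {V C : Set α} (hC : Ha.IsComponent V C) {x y : α}
    (hpath : Ha.VPath V x y) (hxC : x ∈ C) :
    ∀ u v : Hyperedge Ha, x ∈ u.1 → y ∈ v.1 →
      ReachIn JT {z : Hyperedge Ha | ((z.1 : Set α) ∩ C).Nonempty} u v := by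
  induction hpath with
  | refl =>
    intro u v hxu hxv
    have hsub : {z : Hyperedge Ha | x ∈ z.1} ⊆ {z : Hyperedge Ha | ((z.1 : Set α) ∩ C).Nonempty} :=
      fun z hz => ⟨x, hz, hxC⟩
    exact reachIn_mono JT hsub (reachIn_of_node JT x hxu hxv)
  | @tail b c hab hbc ih =>
    intro u v hxu hcv
    have hbC : b ∈ C := comp_closed_vpath hC hxC hab
    have hcC : c ∈ C := comp_closed_adj hC hbC hbc
    obtain ⟨f, hf, hbf, hcf, -, -⟩ := hbc
    have step1 := ih u ⟨f, hf⟩ hxu hbf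
    have hsub : {z : Hyperedge Ha | c ∈ z.1} ⊆ {z : Hyperedge Ha | ((z.1 : Set α) ∩ C).Nonempty} :=
      fun z hz => ⟨c, hz, hcC⟩
    exact reachIn_trans JT step1 (reachIn_mono JT hsub (reachIn_of_node JT c hcf hcv))

lemma reachIn_comp {V C : Set α} (hC : Ha.IsComponent V C) {u v : Hyperedge Ha}
    (hu : ((u.1 : Set α) ∩ C).Nonempty) (hv : ((v.1 : Set α) ∩ C).Nonempty) :
    ReachIn JT {z : Hyperedge Ha | ((z.1 : Set α) ∩ C).Nonempty} u v := by
  obtain ⟨x, hxu, hxC⟩ := hu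
  obtain ⟨y, hyv, hyC⟩ := hv
  exact reachIn_comp_aux JT hC (hC.2.2.1 x hxC y hyC) hxC u v hxu hyv

/-- **Interface lemma**: for every `[r]`-component `C` there is a hyperedge meeting `C`
that covers the whole interface `Fr C ∩ r`. -/
lemma exists_rep (JT : JoinTree Ha) (r : Hyperedge Ha) {C : Set α} (hC : Ha.IsComponent (r.1 : Set α) C) :
    ∃ e : Hyperedge Ha, ((e.1 : Set α) ∩ C).Nonempty ∧ Ha.Fr C ∩ (r.1 : Set α) ⊆ (e.1 : Set α) := by
  classical
  set S : Set (Hyperedge Ha) := {z : Hyperedge Ha | ((z.1 : Set α) ∩ C).Nonempty} with hS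
  -- S is nonempty
  obtain ⟨y0, hy0⟩ := hC.1
  obtain ⟨f0, hf0, hy0f⟩ := (hC.2.1 hy0).1
  have hSne : S.Nonempty := ⟨⟨f0, hf0⟩, ⟨y0, hy0f, hy0⟩⟩
  -- pick `e ∈ S` minimizing the distance to `r` in the join tree
  obtain ⟨e, heS, hemin⟩ := Set.exists_min_image S (fun v => JT.T.dist r v) (Set.toFinite S) hSne
  refine ⟨e, heS, ?_⟩
  rintro x ⟨hxF, hxr⟩
  obtain ⟨f, hf, hxf, y, hyC, hyf⟩ := hxF
  have hfS : (⟨f, hf⟩ : Hyperedge Ha) ∈ S := ⟨y, hyf, hyC⟩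
  -- the unique path from r to e
  have hconn : JT.T.Connected := JT.isTree.1
  have hreach : JT.T.Reachable r e := hconn r e
  obtain ⟨P0, hP0len⟩ := hreach.exists_walk_length_eq_dist
  have hP0path : P0.bypass.IsPath := SimpleGraph.Walk.bypass_isPath P0
  have hP0blen : P0.bypass.length = JT.T.dist r e := by
    have h1 := SimpleGraph.Walk.length_bypass_le P0
    have h2 := JT.T.dist_le P0.bypass
    omega
  set P : JT.T.Walk r e := P0.bypass with hP
  -- a path from e to f inside S
  obtain ⟨Q0, hQ0⟩ := reachIn_comp JT hC heS hfS
  have hQpath : Q0.bypass.IsPath := SimpleGraph.Walk.bypass_isPath Q0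
  have hQsupp : ∀ z ∈ Q0.bypass.support, z ∈ S := fun z hz =>
    hQ0 z (SimpleGraph.Walk.support_bypass_subset Q0 hz)
  set Q : JT.T.Walk e ⟨f, hf⟩ := Q0.bypass with hQ
  -- P and Q only share the vertex e
  have hshare : ∀ v ∈ P.support, v ∈ Q.support → v = e := by
    intro v hvP hvQ
    by_contra hne
    have hvS : v ∈ S := hQsupp v hvQ
    have hle : JT.T.dist r e ≤ JT.T.dist r v := hemin v hvS
    -- but v is a proper inner vertex of the path P from r to e
    have hdec : (P.takeUntil v hvP).length + (P.dropUntil v hvP).length = P.length := by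
      rw [← SimpleGraph.Walk.length_append, SimpleGraph.Walk.take_spec]
    have hdrop : (P.dropUntil v hvP).length ≠ 0 := by
      intro h0
      exact hne (SimpleGraph.Walk.eq_of_length_eq_zero h0)
    have hlt : (P.takeUntil v hvP).length < P.length := by omega
    have : JT.T.dist r v < JT.T.dist r e := by
      calc JT.T.dist r v ≤ (P.takeUntil v hvP).length := JT.T.dist_le _
        _ < P.length := hlt
        _ = JT.T.dist r e := hP0blen
    omega
  -- hence their concatenation is a path
  have happ : (P.append Q).IsPath := by
    rw [SimpleGraph.Walk.isPath_def, SimpleGraph.Walk.support_append]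
    apply List.Nodup.append
    · exact (SimpleGraph.Walk.isPath_def _).1 hP0path
    · exact (((SimpleGraph.Walk.isPath_def _).1 hQpath).sublist (List.tail_sublist _))
    · intro z hzP hzQ
      have hze : z = e := hshare z hzP ((List.tail_sublist _).mem hzQ)
      have hnd := (SimpleGraph.Walk.isPath_def _).1 hQpath
      rw [SimpleGraph.Walk.support_eq_cons Q] at hnd
      rw [hze] at hzQ
      exact (List.nodup_cons.1 hnd).1 hzQ
  -- the walk of hyperedges containing x
  obtain ⟨R0, hR0⟩ := reachIn_of_node JT x (u := r) (v := ⟨f, hf⟩) hxr hxf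
  have hRpath : R0.bypass.IsPath := SimpleGraph.Walk.bypass_isPath R0
  have hRsupp : ∀ z ∈ R0.bypass.support, x ∈ z.1 := fun z hz =>
    hR0 z (SimpleGraph.Walk.support_bypass_subset R0 hz)
  -- by uniqueness of paths, the two paths coincide
  have hunique := JT.isTree.2.path_unique ⟨P.append Q, happ⟩ ⟨R0.bypass, hRpath⟩
  have heR : e ∈ R0.bypass.support := by
    have : e ∈ (P.append Q).support := by
      rw [SimpleGraph.Walk.mem_support_append_iff]
      exact Or.inl (SimpleGraph.Walk.end_mem_support P)
    have hwalks : (P.append Q) = R0.bypass := congrArg Subtype.val hunique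
    rwa [hwalks] at this
  exact hRsupp e heR

end JoinTreeLemmas


/-! #### The construction data: representatives and step components -/

section Construction

open scoped Classical

/-- The representative hyperedge of a component: it meets the component and covers
the interface. -/
noncomputable def rep (JT0 : JoinTree Ha) (r : Hyperedge Ha) (C : Set α) : Hyperedge Ha :=
  if h : Ha.IsComponent (r.1 : Set α) C then (exists_rep JT0 r h).choose else r

lemma rep_meets (JT0 : JoinTree Ha) (r : Hyperedge Ha) {C : Set α}
    (hC : Ha.IsComponent (r.1 : Set α) C) : (((rep JT0 r C).1 : Set α) ∩ C).Nonempty := by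
  rw [rep, dif_pos hC]
  exact (exists_rep JT0 r hC).choose_spec.1

lemma rep_covers (JT0 : JoinTree Ha) (r : Hyperedge Ha) {C : Set α}
    (hC : Ha.IsComponent (r.1 : Set α) C) :
    Ha.Fr C ∩ (r.1 : Set α) ⊆ ((rep JT0 r C).1 : Set α) := by
  rw [rep, dif_pos hC]
  exact (exists_rep JT0 r hC).choose_spec.2

lemma rep_ne (JT0 : JoinTree Ha) (r : Hyperedge Ha) {C : Set α}
    (hC : Ha.IsComponent (r.1 : Set α) C) : rep JT0 r C ≠ r := by
  intro h
  obtain ⟨y, hy, hyC⟩ := rep_meets JT0 r hC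
  rw [h] at hy
  exact (hC.2.1 hyC).2 hy

lemma rep_determines (JT0 : JoinTree Ha) (r : Hyperedge Ha) {C D : Set α}
    (hC : Ha.IsComponent (r.1 : Set α) C) (hD : Ha.IsComponent (r.1 : Set α) D)
    (heq : rep JT0 r C = rep JT0 r D) : C = D := by
  obtain ⟨x, hx, hxC⟩ := rep_meets JT0 r hC
  obtain ⟨y, hy, hyD⟩ := rep_meets JT0 r hD
  rw [← heq] at hy
  have hadj : Ha.Adj (r.1 : Set α) x y :=
    edge_adj (rep JT0 r C).2 hx hy (hC.2.1 hxC).2 (hD.2.1 hyD).2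
  exact isComponent_unique hC hD (comp_closed_adj hC hxC hadj) hyD

/-- In a reduced hypergraph, distinct hyperedges are incomparable. -/
lemma exists_mem_not_mem (hred : Ha.Reduced) {e r : Hyperedge Ha} (hne : e ≠ r) :
    ∃ x ∈ e.1, x ∉ r.1 :=
  reduced_diff hred e.2 r.2 (fun h => hne (Subtype.ext h))

/-- The `[r]`-component met by the hyperedge `e`. -/
noncomputable def compOf (r e : Hyperedge Ha) : Set α :=
  if h : ∃ x ∈ e.1, x ∉ r.1 then Ha.compPt (r.1 : Set α) h.choose else ∅

lemma compOf_self (r : Hyperedge Ha) : compOf r r = ∅ := by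
  rw [compOf, dif_neg]
  rintro ⟨x, hx, hx'⟩
  exact hx' hx

lemma compOf_isComponent (hred : Ha.Reduced) {r e : Hyperedge Ha} (hne : e ≠ r) :
    Ha.IsComponent (r.1 : Set α) (compOf r e) := by
  have h := exists_mem_not_mem hred hne
  rw [compOf, dif_pos h]
  exact compPt_isComponent (mem_nodes_of_mem_edge e.2 h.choose_spec.1)
    (by simpa using h.choose_spec.2)

lemma mem_compOf (hred : Ha.Reduced) {r e : Hyperedge Ha} (hne : e ≠ r) {x : α}
    (hx : x ∈ e.1) (hxr : x ∉ r.1) : x ∈ compOf r e := by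
  have h := exists_mem_not_mem hred hne
  rw [compOf, dif_pos h]
  refine ⟨⟨mem_nodes_of_mem_edge e.2 hx, by simpa using hxr⟩, ?_⟩
  exact Relation.ReflTransGen.single
    (edge_adj e.2 h.choose_spec.1 hx (by simpa using h.choose_spec.2) (by simpa using hxr))

lemma compOf_meets_self (hred : Ha.Reduced) {r e : Hyperedge Ha} (hne : e ≠ r) :
    ((e.1 : Set α) ∩ compOf r e).Nonempty := by
  obtain ⟨x, hx, hxr⟩ := exists_mem_not_mem hred hne
  exact ⟨x, by simpa using hx, mem_compOf hred hne hx hxr⟩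

lemma compOf_eq (hred : Ha.Reduced) {r e : Hyperedge Ha} (hne : e ≠ r) {C : Set α}
    (hC : Ha.IsComponent (r.1 : Set α) C) (hmeet : ((e.1 : Set α) ∩ C).Nonempty) :
    compOf r e = C := by
  obtain ⟨x, hxe, hxC⟩ := hmeet
  have hxr : x ∉ r.1 := by
    have := (hC.2.1 hxC).2
    simpa using this
  exact isComponent_unique (compOf_isComponent hred hne) hC
    (mem_compOf hred hne (by simpa using hxe) hxr) hxC

lemma diff_subset_compOf (hred : Ha.Reduced) {r e : Hyperedge Ha} (hne : e ≠ r) :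
    ((e.1 : Set α) \ (r.1 : Set α)) ⊆ compOf r e := by
  rintro x ⟨hx, hxr⟩
  exact mem_compOf hred hne (by simpa using hx) (by simpa using hxr)

/-- The next step of the chain from `r` towards `e`. -/
noncomputable def nxt (JT0 : JoinTree Ha) (r e : Hyperedge Ha) : Hyperedge Ha :=
  rep JT0 r (compOf r e)

lemma edge_sub_step (hred : Ha.Reduced) (JT0 : JoinTree Ha) {r e : Hyperedge Ha} (hne : e ≠ r) :
    (e.1 : Set α) ⊆ compOf r e ∪ (((nxt JT0 r e).1 : Set α) ∩ (r.1 : Set α)) := by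
  have hC := compOf_isComponent hred hne
  intro x hx
  have hxF : x ∈ Ha.Fr (compOf r e) :=
    edge_subset_fr e.2 (compOf_meets_self hred hne) hx
  rw [fr_eq hC] at hxF
  rcases hxF with h | h
  · exact Or.inl h
  · exact Or.inr ⟨rep_covers JT0 r hC h, h.2⟩

/-- Components of the representative that meet `C` stay inside `C`. -/
lemma comp_of_rep_subset (hred : Ha.Reduced) (JT0 : JoinTree Ha) {r : Hyperedge Ha} {C : Set α}
    (hC : Ha.IsComponent (r.1 : Set α) C) {D : Set α}
    (hD : Ha.IsComponent (((rep JT0 r C).1 : Set α)) D) (hmeet : (D ∩ C).Nonempty) : D ⊆ C := by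
  set s := rep JT0 r C with hs
  have hclo : ∀ a b : α, Ha.Adj (s.1 : Set α) a b → a ∈ C → b ∈ C := by
    intro a b ⟨f, hf, haf, hbf, haS, hbS⟩ haC
    have hfF : (f : Set α) ⊆ Ha.Fr C := edge_subset_fr hf ⟨a, haf, haC⟩
    have hbF : b ∈ Ha.Fr C := hfF hbf
    rw [fr_eq hC] at hbF
    rcases hbF with h | h
    · exact h
    · exact absurd (rep_covers JT0 r hC h) hbS
  obtain ⟨x, hxD, hxC⟩ := hmeet
  intro y hyD
  have hxy : Ha.VPath (s.1 : Set α) x y := hD.2.2.1 x hxD y hyD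
  clear hyD
  induction hxy with
  | refl => exact hxC
  | tail _ hadj ih => exact hclo _ _ hadj ih

/-- Nesting of step components. -/
lemma compOf_nxt_subset (hred : Ha.Reduced) (JT0 : JoinTree Ha) {r e : Hyperedge Ha}
    (hne : e ≠ r) (hes : e ≠ nxt JT0 r e) :
    compOf (nxt JT0 r e) e ⊆ compOf r e := by
  have hC := compOf_isComponent hred hne
  apply comp_of_rep_subset hred JT0 hC (compOf_isComponent hred hes)
  obtain ⟨x, hx, hxs⟩ := exists_mem_not_mem hred hes
  have hxC : x ∈ compOf r e := by
    rcases edge_sub_step hred JT0 hne (by simpa using hx) with h | h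
    · exact h
    · exact absurd h.1 (by simpa using hxs)
  exact ⟨x, mem_compOf hred hes hx hxs, hxC⟩

/-- Decrease lemma for the chain recursion. -/
lemma compOf_nxt_lt (hred : Ha.Reduced) (JT0 : JoinTree Ha) {r e : Hyperedge Ha} (hne : e ≠ r) :
    (compOf (nxt JT0 r e) e).ncard < (compOf r e).ncard := by
  have hC := compOf_isComponent hred hne
  have hCfin : (compOf r e).Finite := comp_finite hC
  have hCpos : 0 < (compOf r e).ncard := by
    rw [Set.ncard_pos hCfin]; exact hC.1
  by_cases hes : e = nxt JT0 r e
  · rw [← hes, compOf_self]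
    simpa using hCpos
  · set s := nxt JT0 r e with hsdef
    have hD := compOf_isComponent hred hes
    have hDC : compOf s e ⊆ compOf r e := compOf_nxt_subset hred JT0 hne hes
    have hss : compOf s e ⊂ compOf r e := by
      refine ⟨hDC, fun hsub => ?_⟩
      obtain ⟨y, hy, hyC⟩ := rep_meets JT0 r hC
      have : y ∈ compOf s e := hsub hyC
      exact (hD.2.1 this).2 hy
    exact Set.ncard_lt_ncard hss hCfin

end Construction


/-! #### Chains from the root -/

section Chains

open scoped Classical

variable {hred₀ : Ha.Reduced}
variable (hred : Ha.Reduced) (JT0 : JoinTree Ha)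

/-- The chain of hyperedges leading from `r` to `e`. -/
noncomputable def chainFrom (hred : Ha.Reduced) (JT0 : JoinTree Ha) (r e : Hyperedge Ha) :
    List (Hyperedge Ha) :=
  if h : e = r then [e] else r :: chainFrom hred JT0 (nxt JT0 r e) e
termination_by (compOf r e).ncard
decreasing_by exact compOf_nxt_lt hred JT0 h

lemma cf_self (r : Hyperedge Ha) : chainFrom hred JT0 r r = [r] := by
  rw [chainFrom, dif_pos rfl]

lemma cf_ne {r e : Hyperedge Ha} (hne : e ≠ r) :
    chainFrom hred JT0 r e = r :: chainFrom hred JT0 (nxt JT0 r e) e := by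
  rw [chainFrom, dif_neg hne]

lemma cf_head_tail (r e : Hyperedge Ha) :
    chainFrom hred JT0 r e = r :: (chainFrom hred JT0 r e).tail := by
  by_cases hne : e = r
  · subst hne; rw [cf_self]; rfl
  · rw [cf_ne hred JT0 hne]
    rfl

lemma root_mem_cf (r e : Hyperedge Ha) : r ∈ chainFrom hred JT0 r e := by
  rw [cf_head_tail hred JT0 r e]; exact List.mem_cons_self

lemma self_mem_cf (r e : Hyperedge Ha) : e ∈ chainFrom hred JT0 r e := by
  by_cases hne : e = r
  · subst hne; rw [cf_self]; exact List.mem_singleton.2 rfl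
  · rw [cf_ne hred JT0 hne]
    have : (compOf (nxt JT0 r e) e).ncard < (compOf r e).ncard := compOf_nxt_lt hred JT0 hne
    exact List.mem_cons_of_mem _ (self_mem_cf (nxt JT0 r e) e)
termination_by (compOf r e).ncard

lemma cf_getLastD (r e : Hyperedge Ha) : ∀ d, (chainFrom hred JT0 r e).getLastD d = e := by
  intro d
  by_cases hne : e = r
  · subst hne; rw [cf_self]; rfl
  · rw [cf_ne hred JT0 hne, List.getLastD_cons]
    have : (compOf (nxt JT0 r e) e).ncard < (compOf r e).ncard := compOf_nxt_lt hred JT0 hne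
    exact cf_getLastD (nxt JT0 r e) e r
termination_by (compOf r e).ncard

/-- Every element of a chain is either the root or meets the root component. -/
lemma cf_meet {r e : Hyperedge Ha} :
    ∀ x ∈ chainFrom hred JT0 r e, x = r ∨ ((x.1 : Set α) ∩ compOf r e).Nonempty := by
  intro x hx
  by_cases hne : e = r
  · subst hne; rw [cf_self] at hx; exact Or.inl (List.mem_singleton.1 hx)
  · rw [cf_ne hred JT0 hne] at hx
    rcases List.mem_cons.1 hx with h | h
    · exact Or.inl h
    · right
      have hdec : (compOf (nxt JT0 r e) e).ncard < (compOf r e).ncard := compOf_nxt_lt hred JT0 hne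
      rcases cf_meet x h with h' | h'
      · rw [h']
        exact rep_meets JT0 r (compOf_isComponent hred hne)
      · by_cases hes : e = nxt JT0 r e
        · rw [← hes, compOf_self] at h'
          simpa using h'
        · exact h'.mono (Set.inter_subset_inter_right _ (compOf_nxt_subset hred JT0 hne hes))
termination_by (compOf r e).ncard

lemma cf_tail_meet {r e : Hyperedge Ha} (hne : e ≠ r) :
    ∀ x ∈ chainFrom hred JT0 (nxt JT0 r e) e, ((x.1 : Set α) ∩ compOf r e).Nonempty := by
  intro x hx
  rcases cf_meet hred JT0 x hx with h | h
  · rw [h]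
    exact rep_meets JT0 r (compOf_isComponent hred hne)
  · by_cases hes : e = nxt JT0 r e
    · rw [← hes, compOf_self] at h
      simpa using h
    · exact h.mono (Set.inter_subset_inter_right _ (compOf_nxt_subset hred JT0 hne hes))

lemma step_of_meets (hred : Ha.Reduced) (JT0 : JoinTree Ha) {r e f : Hyperedge Ha} (hne : e ≠ r)
    (hmeet : ((f.1 : Set α) ∩ compOf r e).Nonempty) :
    f ≠ r ∧ compOf r f = compOf r e ∧ nxt JT0 r f = nxt JT0 r e := by
  have hC := compOf_isComponent hred hne
  have hfr : f ≠ r := by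
    rintro rfl
    obtain ⟨x, hx, hxC⟩ := hmeet
    exact (hC.2.1 hxC).2 hx
  have hco : compOf r f = compOf r e := compOf_eq hred hfr hC hmeet
  exact ⟨hfr, hco, by rw [nxt, nxt, hco]⟩

lemma root_not_mem_cf_tail {r e : Hyperedge Ha} (hne : e ≠ r) :
    r ∉ chainFrom hred JT0 (nxt JT0 r e) e := by
  intro hmem
  have h := cf_tail_meet hred JT0 hne r hmem
  obtain ⟨x, hx, hxC⟩ := h
  exact ((compOf_isComponent hred hne).2.1 hxC).2 hx

lemma cf_nodup (r e : Hyperedge Ha) : (chainFrom hred JT0 r e).Nodup := by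
  by_cases hne : e = r
  · subst hne; rw [cf_self]; exact List.nodup_singleton _
  · rw [cf_ne hred JT0 hne]
    have hdec : (compOf (nxt JT0 r e) e).ncard < (compOf r e).ncard := compOf_nxt_lt hred JT0 hne
    exact List.nodup_cons.2 ⟨root_not_mem_cf_tail hred JT0 hne, cf_nodup (nxt JT0 r e) e⟩
termination_by (compOf r e).ncard

/-- Chain consistency: the chain to an intermediate vertex is an initial segment. -/
lemma cf_cons_mid {r e : Hyperedge Ha} :
    ∀ x ∈ chainFrom hred JT0 r e,
      chainFrom hred JT0 r x ++ (chainFrom hred JT0 x e).tail = chainFrom hred JT0 r e := by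
  intro x hx
  by_cases hne : e = r
  · subst hne
    rw [cf_self] at hx
    rw [List.mem_singleton.1 hx, cf_self]
    rfl
  · rw [cf_ne hred JT0 hne] at hx ⊢
    rcases List.mem_cons.1 hx with h | h
    · subst h
      rw [cf_self, ← cf_ne hred JT0 hne, cf_head_tail hred JT0 x e]
      rfl
    · have hdec : (compOf (nxt JT0 r e) e).ncard < (compOf r e).ncard := compOf_nxt_lt hred JT0 hne
      have ih := cf_cons_mid (r := nxt JT0 r e) (e := e) x h
      have hmeet := cf_tail_meet hred JT0 hne x h
      obtain ⟨hxr, -, hnxt⟩ := step_of_meets hred JT0 hne hmeet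
      rw [cf_ne hred JT0 hxr, hnxt, List.cons_append, ih]
termination_by (compOf r e).ncard

/-- Every non-root element of a chain is the representative of its parent's component. -/
lemma cf_parent {r e : Hyperedge Ha} (hne : e ≠ r) :
    ∃ p ∈ chainFrom hred JT0 r e,
      chainFrom hred JT0 r e = chainFrom hred JT0 r p ++ [e] ∧ e = nxt JT0 p e := by
  by_cases hes : e = nxt JT0 r e
  · refine ⟨r, root_mem_cf hred JT0 r e, ?_, hes⟩
    rw [cf_ne hred JT0 hne, ← hes, cf_self, cf_self]
    rfl
  · have hdec : (compOf (nxt JT0 r e) e).ncard < (compOf r e).ncard := compOf_nxt_lt hred JT0 hne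
    obtain ⟨p, hp, hcfp, henxt⟩ := cf_parent (r := nxt JT0 r e) (hne := hes)
    have hmeet := cf_tail_meet hred JT0 hne p hp
    obtain ⟨hpr, -, hnxt⟩ := step_of_meets hred JT0 hne hmeet
    refine ⟨p, ?_, ?_, henxt⟩
    · rw [cf_ne hred JT0 hne]
      exact List.mem_cons_of_mem _ hp
    · rw [cf_ne hred JT0 hne, cf_ne hred JT0 hpr, hnxt, hcfp, List.cons_append]
termination_by (compOf r e).ncard

end Chains


/-! #### Rooted chains: parents and descendants -/

section Rooted

open scoped Classical

variable (hred : Ha.Reduced) (JT0 : JoinTree Ha) (h0 : Hyperedge Ha)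

/-- The parent of a hyperedge in the chain hierarchy rooted at `h0`. -/
noncomputable def parent (e : Hyperedge Ha) : Hyperedge Ha :=
  ((chainFrom hred JT0 h0 e).dropLast).getLastD e

lemma parent_spec {e : Hyperedge Ha} (hne : e ≠ h0) :
    chainFrom hred JT0 h0 e = chainFrom hred JT0 h0 (parent hred JT0 h0 e) ++ [e] ∧
      e = nxt JT0 (parent hred JT0 h0 e) e := by
  obtain ⟨p, hp, hstruct, hnxt⟩ := cf_parent hred JT0 hne
  have hpar : parent hred JT0 h0 e = p := by
    rw [parent, hstruct, List.dropLast_concat, cf_getLastD]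
  rw [hpar]
  exact ⟨hstruct, hnxt⟩

lemma parent_root : parent hred JT0 h0 h0 = h0 := by
  rw [parent, cf_self]
  rfl

lemma parent_mem {e : Hyperedge Ha} (hne : e ≠ h0) :
    parent hred JT0 h0 e ∈ chainFrom hred JT0 h0 e := by
  rw [(parent_spec hred JT0 h0 hne).1]
  exact List.mem_append_left _ (self_mem_cf hred JT0 h0 _)

lemma parent_ne {e : Hyperedge Ha} (hne : e ≠ h0) : parent hred JT0 h0 e ≠ e := by
  intro h
  have := (parent_spec hred JT0 h0 hne).1
  rw [h] at this
  have hlen := congrArg List.length this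
  rw [List.length_append] at hlen
  simp at hlen

lemma self_not_mem_parent_chain {e : Hyperedge Ha} (hne : e ≠ h0) :
    e ∉ chainFrom hred JT0 h0 (parent hred JT0 h0 e) := by
  have hnd := cf_nodup hred JT0 h0 e
  rw [(parent_spec hred JT0 h0 hne).1] at hnd
  have := (List.nodup_append.1 hnd).2.2
  intro hmem
  exact this _ hmem _ (List.mem_singleton.2 rfl) rfl

/-- If `s` (a child of `r`) occurs in the chain of `v`, then the chain of `v` continues
from `r` through `s`. -/
lemma after {s r : Hyperedge Ha} (hs : s ≠ h0) (hr : parent hred JT0 h0 s = r)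
    {v : Hyperedge Ha} (hv : s ∈ chainFrom hred JT0 h0 v) :
    v ≠ r ∧ nxt JT0 r v = s ∧ compOf r v = compOf r s := by
  have hchain_s : chainFrom hred JT0 h0 s = chainFrom hred JT0 h0 r ++ [s] := by
    rw [← hr]; exact (parent_spec hred JT0 h0 hs).1
  have hsr : s ≠ r := hr ▸ Ne.symm (parent_ne hred JT0 h0 hs)
  have h1 : chainFrom hred JT0 h0 v =
      chainFrom hred JT0 h0 s ++ (chainFrom hred JT0 s v).tail :=
    (cf_cons_mid hred JT0 s hv).symm
  have h2 : chainFrom hred JT0 h0 v = chainFrom hred JT0 h0 r ++ chainFrom hred JT0 s v := by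
    rw [h1, hchain_s, List.append_assoc]
    congr 1
    exact (cf_head_tail hred JT0 s v).symm
  have hrv : r ∈ chainFrom hred JT0 h0 v := by
    rw [h2]
    exact List.mem_append_left _ (self_mem_cf hred JT0 h0 r)
  have h3 : chainFrom hred JT0 h0 v =
      chainFrom hred JT0 h0 r ++ (chainFrom hred JT0 r v).tail :=
    (cf_cons_mid hred JT0 r hrv).symm
  have h4 : chainFrom hred JT0 s v = (chainFrom hred JT0 r v).tail :=
    List.append_cancel_left (h2.symm.trans h3)
  have hvr : v ≠ r := by
    rintro rfl
    rw [cf_self] at h4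
    rw [cf_head_tail hred JT0 s v] at h4
    simp at h4
  have h5 : chainFrom hred JT0 (nxt JT0 r v) v = chainFrom hred JT0 s v := by
    rw [h4, cf_ne hred JT0 hvr]
    rfl
  have hnxt : nxt JT0 r v = s := by
    have h6 := h5
    rw [cf_head_tail hred JT0 (nxt JT0 r v) v, cf_head_tail hred JT0 s v] at h6
    injection h6 with h7 h8
  refine ⟨hvr, hnxt, ?_⟩
  have hnxts : nxt JT0 r s = s := by
    rw [← hr]; exact (parent_spec hred JT0 h0 hs).2.symm
  exact rep_determines JT0 r (compOf_isComponent hred hvr) (compOf_isComponent hred hsr)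
    (hnxt.trans hnxts.symm)

/-- Nesting of components along the hierarchy. -/
lemma nest {v : Hyperedge Ha} (hv : v ≠ h0) (hp : parent hred JT0 h0 v ≠ h0) :
    compOf (parent hred JT0 h0 v) v ⊆
      compOf (parent hred JT0 h0 (parent hred JT0 h0 v)) (parent hred JT0 h0 v) := by
  set p := parent hred JT0 h0 v with hpdef
  set g := parent hred JT0 h0 p with hgdef
  have hvp : v ≠ p := Ne.symm (parent_ne hred JT0 h0 hv)
  have hpg : p ≠ g := Ne.symm (parent_ne hred JT0 h0 hp)
  have hpmem : p ∈ chainFrom hred JT0 h0 v := parent_mem hred JT0 h0 hv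
  obtain ⟨hvg, hnxtg, hcomp⟩ := after hred JT0 h0 hp hgdef.symm hpmem
  have hC : Ha.IsComponent (g.1 : Set α) (compOf g p) := compOf_isComponent hred hpg
  have hrep : rep JT0 g (compOf g p) = p := by
    rw [← hcomp, ← nxt, hnxtg]
  obtain ⟨y, hy, hyg⟩ := exists_mem_not_mem hred hvg
  have hyC : y ∈ compOf g p := by
    rw [← hcomp]
    exact mem_compOf hred hvg hy hyg
  have hsub : ((v.1 : Set α) \ (p.1 : Set α)) ⊆ compOf g p := by
    rintro x ⟨hxv, hxp⟩
    by_cases hxg : x ∈ g.1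
    · exfalso
      have hxF : x ∈ Ha.Fr (compOf g p) := edge_subset_fr v.2 ⟨y, by simpa using hy, hyC⟩ hxv
      have := rep_covers JT0 g hC ⟨hxF, by simpa using hxg⟩
      rw [hrep] at this
      exact hxp this
    · rw [← hcomp]
      exact mem_compOf hred hvg (by simpa using hxv) hxg
  have hD : Ha.IsComponent (p.1 : Set α) (compOf p v) := compOf_isComponent hred hvp
  have hD' : Ha.IsComponent (((rep JT0 g (compOf g p)).1 : Set α)) (compOf p v) := by
    rw [hrep]; exact hD
  apply comp_of_rep_subset hred JT0 hC hD'
  obtain ⟨z, hz, hzp⟩ := exists_mem_not_mem hred hvp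
  exact ⟨z, mem_compOf hred hvp hz hzp, hsub ⟨by simpa using hz, by simpa using hzp⟩⟩

/-- **Main chain lemma**: every hyperedge meeting a component `C` hanging below `r`
has `r` on its chain, continuing through the representative of `C`. -/
lemma w_aux : ∀ (n : ℕ) (r : Hyperedge Ha), (chainFrom hred JT0 h0 r).length = n →
    ∀ (C : Set α), Ha.IsComponent (r.1 : Set α) C →
    (r = h0 ∨ C ⊆ compOf (parent hred JT0 h0 r) r) →
    ∀ e : Hyperedge Ha, ((e.1 : Set α) ∩ C).Nonempty →
      r ∈ chainFrom hred JT0 h0 e ∧ e ≠ r ∧ nxt JT0 r e = rep JT0 r C := by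
  intro n
  induction n using Nat.strong_induction_on with
  | _ n ih =>
  intro r hn
  intro C hC htop e hmeet
  obtain ⟨x, hxe, hxC⟩ := hmeet
  have her : e ≠ r := by
    rintro rfl
    exact (hC.2.1 hxC).2 hxe
  have hcomp : compOf r e = C := compOf_eq hred her hC ⟨x, hxe, hxC⟩
  have hnxt : nxt JT0 r e = rep JT0 r C := by rw [nxt, hcomp]
  refine ⟨?_, her, hnxt⟩
  rcases htop with rfl | hsub
  · exact root_mem_cf hred JT0 _ e
  · by_cases hrh : r = h0
    · exact hrh ▸ root_mem_cf hred JT0 _ e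
    · set p := parent hred JT0 h0 r with hpdef
      have hrp : r ≠ p := Ne.symm (parent_ne hred JT0 h0 hrh)
      have hD : Ha.IsComponent (p.1 : Set α) (compOf p r) := compOf_isComponent hred hrp
      have hlen : (chainFrom hred JT0 h0 p).length < n := by
        rw [← hn, (parent_spec hred JT0 h0 hrh).1, List.length_append]
        simp [hpdef]
      have htop' : p = h0 ∨ compOf p r ⊆ compOf (parent hred JT0 h0 p) p := by
        by_cases hph : p = h0
        · exact Or.inl hph
        · exact Or.inr (nest hred JT0 h0 hrh hph)
      obtain ⟨hpmem, hep, hnxtp⟩ := ih _ hlen p rfl (compOf p r) hD htop' e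
        ⟨x, hxe, hsub hxC⟩
      have hrepD : rep JT0 p (compOf p r) = r := by
        rw [← nxt]
        exact ((parent_spec hred JT0 h0 hrh).2).symm
      rw [hrepD] at hnxtp
      -- now r is on the chain of e right after p
      have h1 : chainFrom hred JT0 h0 e =
          chainFrom hred JT0 h0 p ++ (chainFrom hred JT0 p e).tail :=
        (cf_cons_mid hred JT0 p hpmem).symm
      have h2 : (chainFrom hred JT0 p e).tail = chainFrom hred JT0 r e := by
        rw [cf_ne hred JT0 hep, hnxtp]
        rfl
      rw [h1, h2]
      exact List.mem_append_right _ (root_mem_cf hred JT0 r e)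


lemma w_lemma (r : Hyperedge Ha) (C : Set α) (hC : Ha.IsComponent (r.1 : Set α) C)
    (htop : r = h0 ∨ C ⊆ compOf (parent hred JT0 h0 r) r)
    (e : Hyperedge Ha) (hmeet : ((e.1 : Set α) ∩ C).Nonempty) :
    r ∈ chainFrom hred JT0 h0 e ∧ e ≠ r ∧ nxt JT0 r e = rep JT0 r C :=
  w_aux hred JT0 h0 _ r rfl C hC htop e hmeet


/-- The representative of a properly hanging component is a child of `r`. -/
lemma child_of_component {r : Hyperedge Ha} {C : Set α} (hC : Ha.IsComponent (r.1 : Set α) C)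
    (htop : r = h0 ∨ C ⊆ compOf (parent hred JT0 h0 r) r) :
    parent hred JT0 h0 (rep JT0 r C) = r ∧ rep JT0 r C ≠ h0 ∧ compOf r (rep JT0 r C) = C ∧
      chainFrom hred JT0 h0 (rep JT0 r C) = chainFrom hred JT0 h0 r ++ [rep JT0 r C] := by
  set s := rep JT0 r C with hsdef
  obtain ⟨hrmem, hsr, hnxt⟩ := w_lemma hred JT0 h0 r C hC htop s (rep_meets JT0 r hC)
  have hcfrs : chainFrom hred JT0 r s = [r, s] := by
    rw [cf_ne hred JT0 hsr, hnxt, ← hsdef, cf_self]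
  have hstruct : chainFrom hred JT0 h0 s = chainFrom hred JT0 h0 r ++ [s] := by
    rw [← cf_cons_mid hred JT0 r hrmem, hcfrs]
    rfl
  have hpar : parent hred JT0 h0 s = r := by
    rw [parent, hstruct, List.dropLast_concat, cf_getLastD]
  have hs0 : s ≠ h0 := by
    intro h
    have hlen := congrArg List.length hstruct
    rw [h, cf_self] at hlen
    simp only [List.length_append, List.length_singleton, List.length_cons,
      List.length_nil] at hlen
    have hpos : 0 < (chainFrom hred JT0 h0 r).length := by
      rw [cf_head_tail hred JT0 h0 r]
      simp
    omega
  exact ⟨hpar, hs0, compOf_eq hred hsr hC (rep_meets JT0 r hC), hstruct⟩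

/-- Edges in a descendant subtree are contained in the component plus the interface. -/
lemma desc_edge_subset {s r : Hyperedge Ha} (hs : s ≠ h0) (hr : parent hred JT0 h0 s = r)
    {v : Hyperedge Ha} (hv : s ∈ chainFrom hred JT0 h0 v) :
    (v.1 : Set α) ⊆ compOf r s ∪ ((s.1 : Set α) ∩ (r.1 : Set α)) := by
  obtain ⟨hvr, hnxt, hcomp⟩ := after hred JT0 h0 hs hr hv
  have := edge_sub_step hred JT0 hvr
  rwa [hnxt, hcomp] at this

/-- Generalized nesting: components hanging below a chain element are nested. -/
lemma nest' {g u : Hyperedge Ha} (hg : g ≠ h0) (hgu : g ∈ chainFrom hred JT0 h0 u)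
    (hug : u ≠ g) : compOf g u ⊆ compOf (parent hred JT0 h0 g) g := by
  set pg := parent hred JT0 h0 g with hpgdef
  have hgpg : g ≠ pg := Ne.symm (parent_ne hred JT0 h0 hg)
  obtain ⟨hupg, hnxtpg, hcomp⟩ := after hred JT0 h0 hg hpgdef.symm hgu
  have hC : Ha.IsComponent (pg.1 : Set α) (compOf pg g) := compOf_isComponent hred hgpg
  have hrep : rep JT0 pg (compOf pg g) = g := by
    rw [← nxt, ← (parent_spec hred JT0 h0 hg).2]
  have hD' : Ha.IsComponent (((rep JT0 pg (compOf pg g)).1 : Set α)) (compOf g u) := by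
    rw [hrep]; exact compOf_isComponent hred hug
  apply comp_of_rep_subset hred JT0 hC hD'
  obtain ⟨z, hz, hzg⟩ := exists_mem_not_mem hred hug
  have hzC : z ∈ compOf pg g := by
    rcases edge_sub_step hred JT0 hupg (by simpa using hz) with h | h
    · rwa [hcomp] at h
    · rw [hnxtpg] at h
      exact absurd h.1 (by simpa using hzg)
  exact ⟨z, mem_compOf hred hug hz hzg, hzC⟩

/-- Any hyperedge meeting the component of a child `s` has `s` on its chain. -/
lemma mem_desc_of_meets {s r : Hyperedge Ha} (hs : s ≠ h0) (hr : parent hred JT0 h0 s = r)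
    {e : Hyperedge Ha} (hmeet : ((e.1 : Set α) ∩ compOf r s).Nonempty) :
    s ∈ chainFrom hred JT0 h0 e := by
  have hsr : s ≠ r := hr ▸ Ne.symm (parent_ne hred JT0 h0 hs)
  have hC : Ha.IsComponent (r.1 : Set α) (compOf r s) := compOf_isComponent hred hsr
  have htop : r = h0 ∨ compOf r s ⊆ compOf (parent hred JT0 h0 r) r := by
    by_cases hrh : r = h0
    · exact Or.inl hrh
    · right
      have := nest hred JT0 h0 hs (by rw [hr]; exact hrh)
      rwa [hr] at this
  obtain ⟨hrmem, her, hnxt⟩ := w_lemma hred JT0 h0 r (compOf r s) hC htop e hmeet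
  have hreps : rep JT0 r (compOf r s) = s := by
    rw [← nxt, ← hr, ← (parent_spec hred JT0 h0 hs).2]
  rw [hreps] at hnxt
  rw [← cf_cons_mid hred JT0 r hrmem, cf_ne hred JT0 her, hnxt, List.tail_cons]
  exact List.mem_append_right _ (root_mem_cf hred JT0 s e)

/-- Disjointness of ancestor hyperedges from hanging components. -/
lemma anc_disjoint : ∀ (f : Hyperedge Ha), f ≠ h0 →
    ∀ g ∈ chainFrom hred JT0 h0 (parent hred JT0 h0 f),
      ((g.1 : Set α) ∩ compOf (parent hred JT0 h0 f) f) = ∅ := by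
  suffices H : ∀ (n : ℕ) (f : Hyperedge Ha), (chainFrom hred JT0 h0 f).length = n → f ≠ h0 →
      ∀ g ∈ chainFrom hred JT0 h0 (parent hred JT0 h0 f),
        ((g.1 : Set α) ∩ compOf (parent hred JT0 h0 f) f) = ∅ by
    exact fun f => H _ f rfl
  intro n
  induction n using Nat.strong_induction_on with
  | _ n ih =>
  intro f hn hf g hg
  set p := parent hred JT0 h0 f with hpdef
  have hfp : f ≠ p := Ne.symm (parent_ne hred JT0 h0 hf)
  have hcompf : Ha.IsComponent (p.1 : Set α) (compOf p f) := compOf_isComponent hred hfp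
  by_cases hph : p = h0
  · rw [hph] at hg
    rw [cf_self] at hg
    rw [List.mem_singleton.1 hg]
    rw [Set.eq_empty_iff_forall_notMem]
    intro x ⟨hxg, hxC⟩
    have := (hcompf.2.1 hxC).2
    rw [hph] at this
    exact this hxg
  · rw [(parent_spec hred JT0 h0 hph).1] at hg
    rcases List.mem_append.1 hg with h | h
    · have hlen : (chainFrom hred JT0 h0 p).length < n := by
        rw [← hn, (parent_spec hred JT0 h0 hf).1, List.length_append]
        simp [hpdef]
      have ihp := ih _ hlen p rfl hph g h
      have hnestf := nest hred JT0 h0 hf hph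
      rw [Set.eq_empty_iff_forall_notMem]
      rintro x ⟨hxg, hxC⟩
      rw [Set.eq_empty_iff_forall_notMem] at ihp
      exact ihp x ⟨hxg, hnestf hxC⟩
    · rw [List.mem_singleton.1 h]
      rw [Set.eq_empty_iff_forall_notMem]
      rintro x ⟨hxp, hxC⟩
      exact (hcompf.2.1 hxC).2 hxp

end Rooted


/-! #### The new join tree as a graph -/

section Graph

open scoped Classical

variable (hred : Ha.Reduced) (JT0 : JoinTree Ha) (h0 : Hyperedge Ha)

/-- The tree on hyperedges determined by the parent function. -/
noncomputable def bigG : SimpleGraph (Hyperedge Ha) where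
  Adj a b := (a ≠ h0 ∧ parent hred JT0 h0 a = b) ∨ (b ≠ h0 ∧ parent hred JT0 h0 b = a)
  symm := by
    constructor
    rintro a b (⟨h1, h2⟩ | ⟨h1, h2⟩)
    · exact Or.inr ⟨h1, h2⟩
    · exact Or.inl ⟨h1, h2⟩
  loopless := by
    constructor
    rintro a (⟨h1, h2⟩ | ⟨h1, h2⟩) <;> exact parent_ne hred JT0 h0 h1 h2

/-- The depth of a hyperedge (length of its chain). -/
noncomputable def depth (e : Hyperedge Ha) : ℕ := (chainFrom hred JT0 h0 e).length

lemma depth_pos (e : Hyperedge Ha) : 0 < depth hred JT0 h0 e := by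
  rw [depth, cf_head_tail hred JT0 h0 e]
  simp

lemma depth_root : depth hred JT0 h0 h0 = 1 := by
  rw [depth, cf_self]
  rfl

lemma depth_parent {e : Hyperedge Ha} (hne : e ≠ h0) :
    depth hred JT0 h0 (parent hred JT0 h0 e) + 1 = depth hred JT0 h0 e := by
  rw [depth, depth, (parent_spec hred JT0 h0 hne).1, List.length_append]
  rfl

lemma adj_depth {a b : Hyperedge Ha} (h : (bigG hred JT0 h0).Adj a b) :
    depth hred JT0 h0 a = depth hred JT0 h0 b + 1 ∨
      depth hred JT0 h0 b = depth hred JT0 h0 a + 1 := by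
  rcases h with ⟨h1, h2⟩ | ⟨h1, h2⟩
  · left; rw [← depth_parent hred JT0 h0 h1, h2]
  · right; rw [← depth_parent hred JT0 h0 h1, h2]

/-- `v` is a descendant of `s`. -/
def Desc (s v : Hyperedge Ha) : Prop := s ∈ chainFrom hred JT0 h0 v

lemma desc_self (s : Hyperedge Ha) : Desc hred JT0 h0 s s := self_mem_cf hred JT0 h0 s

lemma desc_up {s v : Hyperedge Ha} (hv : v ≠ h0) (hd : Desc hred JT0 h0 s v) (hne : s ≠ v) :
    Desc hred JT0 h0 s (parent hred JT0 h0 v) := by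
  rw [Desc, (parent_spec hred JT0 h0 hv).1] at hd
  rcases List.mem_append.1 hd with h | h
  · exact h
  · exact absurd (List.mem_singleton.1 h) hne

lemma desc_down {s v : Hyperedge Ha} (hv : v ≠ h0)
    (hd : Desc hred JT0 h0 s (parent hred JT0 h0 v)) : Desc hred JT0 h0 s v := by
  rw [Desc, (parent_spec hred JT0 h0 hv).1]
  exact List.mem_append_left _ hd

lemma not_desc_parent {s : Hyperedge Ha} (hs : s ≠ h0) :
    ¬ Desc hred JT0 h0 s (parent hred JT0 h0 s) :=
  self_not_mem_parent_chain hred JT0 h0 hs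

lemma desc_root_iff {s : Hyperedge Ha} : Desc hred JT0 h0 s h0 ↔ s = h0 := by
  rw [Desc, cf_self]
  exact List.mem_singleton

/-- The only edge leaving the descendants of `s` is the edge to its parent. -/
lemma boundary {s a b : Hyperedge Ha} (hs : s ≠ h0) (hadj : (bigG hred JT0 h0).Adj a b)
    (ha : Desc hred JT0 h0 s a) (hb : ¬ Desc hred JT0 h0 s b) :
    a = s ∧ b = parent hred JT0 h0 s := by
  rcases hadj with ⟨h1, h2⟩ | ⟨h1, h2⟩
  · by_cases has : a = s
    · exact ⟨has, by rw [← h2, has]⟩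
    · exfalso
      exact hb (h2 ▸ desc_up hred JT0 h0 h1 ha (Ne.symm has))
  · exact absurd (desc_down hred JT0 h0 h1 (h2.symm ▸ ha)) hb

lemma cross {s : Hyperedge Ha} (hs : s ≠ h0) :
    ∀ {a b : Hyperedge Ha} (w : (bigG hred JT0 h0).Walk a b),
      Desc hred JT0 h0 s a → ¬ Desc hred JT0 h0 s b →
      s(s, parent hred JT0 h0 s) ∈ w.edges := by
  intro a b w
  induction w with
  | nil => intro ha hb; exact absurd ha hb
  | @cons a c b hadj p ih =>
    intro ha hb
    by_cases hc : Desc hred JT0 h0 s c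
    · exact List.mem_cons_of_mem _ (ih hc hb)
    · obtain ⟨rfl, rfl⟩ := boundary hred JT0 h0 hs hadj ha hc
      exact List.mem_cons_self

lemma bigG_isAcyclic : (bigG hred JT0 h0).IsAcyclic := by
  intro v c hc
  cases c with
  | nil => exact SimpleGraph.Walk.IsCycle.not_of_nil hc
  | cons hadj p =>
    rw [SimpleGraph.Walk.cons_isCycle_iff] at hc
    obtain ⟨hp, hedge⟩ := hc
    rcases hadj with ⟨h1, h2⟩ | ⟨h1, h2⟩
    · apply hedge
      have hcr := cross hred JT0 h0 h1 p.reverse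
        (desc_self hred JT0 h0 v)
        (by rw [← h2]; exact not_desc_parent hred JT0 h0 h1)
      rw [SimpleGraph.Walk.edges_reverse, List.mem_reverse] at hcr
      rwa [h2] at hcr
    · apply hedge
      have hcr := cross hred JT0 h0 h1 p
        (desc_self hred JT0 h0 _)
        (by rw [← h2]; exact not_desc_parent hred JT0 h0 h1)
      rw [h2] at hcr
      rwa [Sym2.eq_swap] at hcr

lemma walk_to_root : ∀ (v : Hyperedge Ha), ∃ w : (bigG hred JT0 h0).Walk v h0,
    w.length + 1 = depth hred JT0 h0 v := by
  suffices H : ∀ (n : ℕ) (v : Hyperedge Ha), depth hred JT0 h0 v = n →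
      ∃ w : (bigG hred JT0 h0).Walk v h0, w.length + 1 = depth hred JT0 h0 v by
    exact fun v => H _ v rfl
  intro n
  induction n using Nat.strong_induction_on with
  | _ n ih =>
  intro v hn
  by_cases hv : v = h0
  · refine ⟨SimpleGraph.Walk.nil.copy hv.symm rfl, ?_⟩
    rw [SimpleGraph.Walk.length_copy, hv, depth_root]
    simp
  · have hdp := depth_parent hred JT0 h0 hv
    obtain ⟨w', hw'⟩ := ih (depth hred JT0 h0 (parent hred JT0 h0 v)) (by omega) _ rfl
    refine ⟨SimpleGraph.Walk.cons (Or.inl ⟨hv, rfl⟩) w', ?_⟩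
    show w'.length + 1 + _ = _
    omega

lemma bigG_connected : (bigG hred JT0 h0).Connected := by
  rw [SimpleGraph.connected_iff]
  refine ⟨fun u v => ?_, ⟨h0⟩⟩
  obtain ⟨wu, -⟩ := walk_to_root hred JT0 h0 u
  obtain ⟨wv, -⟩ := walk_to_root hred JT0 h0 v
  exact SimpleGraph.Walk.reachable (wu.append wv.reverse)

lemma walk_up {s v : Hyperedge Ha} (hd : Desc hred JT0 h0 s v) :
    ∃ w : (bigG hred JT0 h0).Walk v s,
      w.length + depth hred JT0 h0 s = depth hred JT0 h0 v := by
  suffices H : ∀ (n : ℕ) (v : Hyperedge Ha), depth hred JT0 h0 v = n →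
      Desc hred JT0 h0 s v → ∃ w : (bigG hred JT0 h0).Walk v s,
        w.length + depth hred JT0 h0 s = depth hred JT0 h0 v by
    exact H _ v rfl hd
  intro n
  induction n using Nat.strong_induction_on with
  | _ n ih =>
  intro v hn hd
  by_cases hvs : s = v
  · refine ⟨SimpleGraph.Walk.nil.copy hvs rfl, ?_⟩
    rw [SimpleGraph.Walk.length_copy, hvs]
    simp
  · have hv : v ≠ h0 := by
      intro hveq
      rw [hveq] at hd
      rw [hveq] at hvs
      exact hvs ((desc_root_iff hred JT0 h0).1 hd)
    have hdp := depth_parent hred JT0 h0 hv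
    obtain ⟨w', hw'⟩ := ih (depth hred JT0 h0 (parent hred JT0 h0 v)) (by omega) _ rfl
      (desc_up hred JT0 h0 hv hd hvs)
    refine ⟨SimpleGraph.Walk.cons (Or.inl ⟨hv, rfl⟩) w', ?_⟩
    show w'.length + 1 + _ = _
    omega

end Graph


/-! #### Distances in the new tree -/

section Dist

open scoped Classical

variable (hred : Ha.Reduced) (JT0 : JoinTree Ha) (h0 : Hyperedge Ha)

lemma dist_lt_of_desc {s v : Hyperedge Ha} (hs : s ≠ h0) (hd : Desc hred JT0 h0 s v) :
    (bigG hred JT0 h0).dist v s < (bigG hred JT0 h0).dist v (parent hred JT0 h0 s) := by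
  set r := parent hred JT0 h0 s with hrdef
  have hsr : s ≠ r := Ne.symm (parent_ne hred JT0 h0 hs)
  obtain ⟨w, hw⟩ :=
    ((bigG_connected hred JT0 h0) v r).exists_walk_length_eq_dist
  have hcr : s(s, r) ∈ w.edges :=
    cross hred JT0 h0 hs w hd (not_desc_parent hred JT0 h0 hs)
  have hmem : s ∈ w.support := SimpleGraph.Walk.fst_mem_support_of_mem_edges w hcr
  have hsplit : (w.takeUntil s hmem).length + (w.dropUntil s hmem).length = w.length := by
    rw [← SimpleGraph.Walk.length_append, SimpleGraph.Walk.take_spec]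
  have hdrop : (w.dropUntil s hmem).length ≠ 0 := fun h0' =>
    hsr (SimpleGraph.Walk.eq_of_length_eq_zero h0')
  have h1 : (bigG hred JT0 h0).dist v s ≤ (w.takeUntil s hmem).length :=
    SimpleGraph.dist_le _
  omega

lemma dist_lt_of_not_desc {s v : Hyperedge Ha} (hs : s ≠ h0)
    (hnd : ¬ Desc hred JT0 h0 s v) :
    (bigG hred JT0 h0).dist v (parent hred JT0 h0 s) < (bigG hred JT0 h0).dist v s := by
  set r := parent hred JT0 h0 s with hrdef
  have hsr : r ≠ s := parent_ne hred JT0 h0 hs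
  obtain ⟨w, hw⟩ :=
    ((bigG_connected hred JT0 h0) v s).exists_walk_length_eq_dist
  have hcr : s(s, r) ∈ w.edges := by
    have := cross hred JT0 h0 hs w.reverse (desc_self hred JT0 h0 s) hnd
    rwa [SimpleGraph.Walk.edges_reverse, List.mem_reverse] at this
  have hmem : r ∈ w.support := SimpleGraph.Walk.snd_mem_support_of_mem_edges w hcr
  have hsplit : (w.takeUntil r hmem).length + (w.dropUntil r hmem).length = w.length := by
    rw [← SimpleGraph.Walk.length_append, SimpleGraph.Walk.take_spec]
  have hdrop : (w.dropUntil r hmem).length ≠ 0 := fun h0' =>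
    hsr (SimpleGraph.Walk.eq_of_length_eq_zero h0')
  have h1 : (bigG hred JT0 h0).dist v r ≤ (w.takeUntil r hmem).length :=
    SimpleGraph.dist_le _
  omega

lemma depth_le_walk {a b : Hyperedge Ha} (w : (bigG hred JT0 h0).Walk a b) :
    depth hred JT0 h0 b ≤ w.length + depth hred JT0 h0 a := by
  induction w with
  | nil => simp
  | @cons a c b hadj p ih =>
    rcases adj_depth hred JT0 h0 hadj with h | h <;>
      (rw [SimpleGraph.Walk.length_cons]; omega)

lemma dist_root (v : Hyperedge Ha) :
    (bigG hred JT0 h0).dist h0 v + 1 = depth hred JT0 h0 v := by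
  obtain ⟨w, hw⟩ := walk_to_root hred JT0 h0 v
  have hle : (bigG hred JT0 h0).dist h0 v ≤ w.length := by
    rw [SimpleGraph.dist_comm]
    exact SimpleGraph.dist_le _
  obtain ⟨w', hw'⟩ :=
    ((bigG_connected hred JT0 h0) h0 v).exists_walk_length_eq_dist
  have hge := depth_le_walk hred JT0 h0 w'
  rw [depth_root hred JT0 h0] at hge
  omega

/-! #### Node-connectivity of the new tree -/

/-- Reachability through hyperedges containing a fixed node. -/
def ReachX (X : α) : Hyperedge Ha → Hyperedge Ha → Prop :=
  Relation.ReflTransGen (fun u v => (X ∈ u.1 ∧ X ∈ v.1) ∧ (bigG hred JT0 h0).Adj u v)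

lemma reachX_symm (X : α) : Symmetric (ReachX hred JT0 h0 X) :=
  fun a b h => by
    haveI : Std.Symm (fun u v : Hyperedge Ha => (X ∈ u.1 ∧ X ∈ v.1) ∧ (bigG hred JT0 h0).Adj u v) :=
      ⟨fun _ _ h => ⟨⟨h.1.2, h.1.1⟩, h.2.symm⟩⟩
    exact Relation.ReflTransGen.symmetric.symm a b h

lemma reachX_chain (X : α) : ∀ (f : Hyperedge Ha), X ∈ f.1 →
    ∀ e : Hyperedge Ha, X ∈ e.1 → e ∈ chainFrom hred JT0 h0 f → ReachX hred JT0 h0 X f e := by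
  suffices H : ∀ (n : ℕ) (f : Hyperedge Ha), depth hred JT0 h0 f = n → X ∈ f.1 →
      ∀ e : Hyperedge Ha, X ∈ e.1 → e ∈ chainFrom hred JT0 h0 f →
        ReachX hred JT0 h0 X f e by
    exact fun f => H _ f rfl
  intro n
  induction n using Nat.strong_induction_on with
  | _ n ih =>
  intro f hn hXf e hXe hmem
  by_cases hef : e = f
  · rw [hef]
    exact Relation.ReflTransGen.refl
  · have hf : f ≠ h0 := by
      intro h
      rw [h, cf_self] at hmem
      exact hef ((List.mem_singleton.1 hmem).trans h.symm)
    set p := parent hred JT0 h0 f with hpdef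
    have hfp : f ≠ p := Ne.symm (parent_ne hred JT0 h0 hf)
    have hep : e ∈ chainFrom hred JT0 h0 p := desc_up hred JT0 h0 hf hmem hef
    have hXp : X ∈ p.1 := by
      by_contra hXp
      have hXC : X ∈ compOf p f := mem_compOf hred hfp hXf hXp
      have hdisj := anc_disjoint hred JT0 h0 f hf e hep
      rw [Set.eq_empty_iff_forall_notMem] at hdisj
      exact hdisj X ⟨by simpa using hXe, hXC⟩
    have hstep : ReachX hred JT0 h0 X f p :=
      Relation.ReflTransGen.single ⟨⟨hXf, hXp⟩, Or.inl ⟨hf, rfl⟩⟩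
    have hdp := depth_parent hred JT0 h0 hf
    rw [← hpdef] at hdp
    exact hstep.trans (ih (depth hred JT0 h0 p) (by omega) p rfl hXp e hXe hep)

lemma common_ancestor (X : α) (u v : Hyperedge Ha) (hu : X ∈ u.1) (hv : X ∈ v.1) :
    ∃ g : Hyperedge Ha, g ∈ chainFrom hred JT0 h0 u ∧ g ∈ chainFrom hred JT0 h0 v ∧
      X ∈ g.1 := by
  set S : Set (Hyperedge Ha) :=
    {g | g ∈ chainFrom hred JT0 h0 u ∧ g ∈ chainFrom hred JT0 h0 v} with hS
  have hSne : S.Nonempty := ⟨h0, root_mem_cf hred JT0 h0 u, root_mem_cf hred JT0 h0 v⟩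
  obtain ⟨g, hgS, hgmax⟩ :=
    Set.exists_max_image S (fun g => depth hred JT0 h0 g) (Set.toFinite S) hSne
  refine ⟨g, hgS.1, hgS.2, ?_⟩
  by_contra hXg
  have hug : u ≠ g := by rintro rfl; exact hXg hu
  have hvg : v ≠ g := by rintro rfl; exact hXg hv
  have htop_u : g = h0 ∨ compOf g u ⊆ compOf (parent hred JT0 h0 g) g := by
    by_cases hg0 : g = h0
    · exact Or.inl hg0
    · exact Or.inr (nest' hred JT0 h0 hg0 hgS.1 hug)
  have htop_v : g = h0 ∨ compOf g v ⊆ compOf (parent hred JT0 h0 g) g := by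
    by_cases hg0 : g = h0
    · exact Or.inl hg0
    · exact Or.inr (nest' hred JT0 h0 hg0 hgS.2 hvg)
  have hCu := compOf_isComponent hred hug
  have hCv := compOf_isComponent hred hvg
  obtain ⟨hpu, hu0, hcu, hcfu⟩ := child_of_component hred JT0 h0 hCu htop_u
  obtain ⟨hpv, hv0, hcv, hcfv⟩ := child_of_component hred JT0 h0 hCv htop_v
  have hmem_u : rep JT0 g (compOf g u) ∈ chainFrom hred JT0 h0 u := by
    rw [← cf_cons_mid hred JT0 g hgS.1, cf_ne hred JT0 hug, List.tail_cons]
    exact List.mem_append_right _ (root_mem_cf hred JT0 _ u)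
  have hmem_v : rep JT0 g (compOf g v) ∈ chainFrom hred JT0 h0 v := by
    rw [← cf_cons_mid hred JT0 g hgS.2, cf_ne hred JT0 hvg, List.tail_cons]
    exact List.mem_append_right _ (root_mem_cf hred JT0 _ v)
  have hdepth_u : depth hred JT0 h0 (rep JT0 g (compOf g u)) = depth hred JT0 h0 g + 1 := by
    rw [depth, hcfu, List.length_append]
    rfl
  have hne : rep JT0 g (compOf g u) ≠ rep JT0 g (compOf g v) := by
    intro heq
    have : rep JT0 g (compOf g u) ∈ S := ⟨hmem_u, by rw [heq]; exact hmem_v⟩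
    have := hgmax _ this
    omega
  have hcomp_ne : compOf g u ≠ compOf g v := fun h => hne (by rw [h])
  have hXCu : X ∈ compOf g u := by
    rcases edge_sub_step hred JT0 hug (by simpa using hu) with h | h
    · exact h
    · exact absurd h.2 (by simpa using hXg)
  have hXCv : X ∈ compOf g v := by
    rcases edge_sub_step hred JT0 hvg (by simpa using hv) with h | h
    · exact h
    · exact absurd h.2 (by simpa using hXg)
  exact hcomp_ne (isComponent_unique hCu hCv hXCu hXCv)

lemma bigG_node_connected (X : α) :
    ((bigG hred JT0 h0).induce {h : Hyperedge Ha | X ∈ h.1}).Preconnected := by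
  have conv : ∀ a b : Hyperedge Ha, ReachX hred JT0 h0 X a b →
      ∀ (ha : X ∈ a.1) (hb : X ∈ b.1),
        ((bigG hred JT0 h0).induce {h : Hyperedge Ha | X ∈ h.1}).Reachable
          ⟨a, ha⟩ ⟨b, hb⟩ := by
    intro a b h
    induction h with
    | refl => intro ha hb; rfl
    | @tail b c hab hbc ih =>
      intro ha hc
      exact (ih ha hbc.1.1).trans (SimpleGraph.Adj.reachable (by exact hbc.2))
  rintro ⟨u, hu⟩ ⟨v, hv⟩
  obtain ⟨g, hgu, hgv, hXg⟩ := common_ancestor hred JT0 h0 X u v hu hv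
  have r1 := reachX_chain hred JT0 h0 X u hu g hXg hgu
  have r2 := reachX_chain hred JT0 h0 X v hv g hXg hgv
  exact conv u v (r1.trans (reachX_symm hred JT0 h0 X r2)) hu hv

end Dist


/-! #### Assembly -/

section Assembly

open scoped Classical

variable (hred : Ha.Reduced) (JT0 : JoinTree Ha) (h0 : Hyperedge Ha)

/-- The new join tree. -/
noncomputable def newJT : JoinTree Ha where
  T := bigG hred JT0 h0
  isTree := ⟨bigG_connected hred JT0 h0, bigG_isAcyclic hred JT0 h0⟩
  node_connected := bigG_node_connected hred JT0 h0

lemma isChild_iff {r s : Hyperedge Ha} :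
    (newJT hred JT0 h0).IsChild h0 r s ↔ s ≠ h0 ∧ parent hred JT0 h0 s = r := by
  have dr := dist_root hred JT0 h0 r
  have ds := dist_root hred JT0 h0 s
  constructor
  · rintro ⟨hadj, hdist⟩
    rcases hadj with ⟨hr0, hpr⟩ | hgood
    · exfalso
      have hdp := depth_parent hred JT0 h0 hr0
      rw [hpr] at hdp
      have hdist' : (bigG hred JT0 h0).dist h0 r < (bigG hred JT0 h0).dist h0 s := hdist
      omega
    · exact hgood
  · rintro ⟨hs0, hps⟩
    have hdp := depth_parent hred JT0 h0 hs0
    rw [hps] at hdp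
    refine ⟨Or.inr ⟨hs0, hps⟩, ?_⟩
    show (bigG hred JT0 h0).dist h0 r < (bigG hred JT0 h0).dist h0 s
    omega

lemma subtreeVerts_eq {r s : Hyperedge Ha} (hs : s ≠ h0) (hps : parent hred JT0 h0 s = r) :
    (newJT hred JT0 h0).subtreeVerts r s = {v | Desc hred JT0 h0 s v} := by
  ext v
  simp only [JoinTree.subtreeVerts, Set.mem_setOf_eq]
  constructor
  · intro hlt
    by_contra hnd
    have := dist_lt_of_not_desc hred JT0 h0 hs hnd
    rw [hps] at this
    have h2 : (newJT hred JT0 h0).T.dist v s = (bigG hred JT0 h0).dist v s := rfl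
    have h3 : (newJT hred JT0 h0).T.dist v r = (bigG hred JT0 h0).dist v r := rfl
    omega
  · intro hd
    have := dist_lt_of_desc hred JT0 h0 hs hd
    rw [hps] at this
    exact this

lemma subtreeNodes_eq {r s : Hyperedge Ha} (hs : s ≠ h0) (hps : parent hred JT0 h0 s = r) :
    (newJT hred JT0 h0).subtreeNodes r s =
      compOf r s ∪ ((s.1 : Set α) ∩ (r.1 : Set α)) := by
  ext x
  constructor
  · rintro ⟨v, hv, hxv⟩
    rw [subtreeVerts_eq hred JT0 h0 hs hps] at hv
    exact desc_edge_subset hred JT0 h0 hs hps hv (by simpa using hxv)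
  · rintro (hx | hx)
    · have hsr : s ≠ r := hps ▸ Ne.symm (parent_ne hred JT0 h0 hs)
      have hC := compOf_isComponent hred hsr
      obtain ⟨e, he, hxe⟩ := (hC.2.1 hx).1
      refine ⟨⟨e, he⟩, ?_, hxe⟩
      rw [subtreeVerts_eq hred JT0 h0 hs hps]
      exact mem_desc_of_meets hred JT0 h0 hs hps ⟨x, by simpa using hxe, hx⟩
    · refine ⟨s, ?_, by simpa using hx.1⟩
      rw [subtreeVerts_eq hred JT0 h0 hs hps]
      exact desc_self hred JT0 h0 s

lemma set_cancel {C C' A R : Set α} (hCR : ∀ x ∈ C, x ∉ R) (hC'R : ∀ x ∈ C', x ∉ R)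
    (hA : A ⊆ R) (h : C' ∪ A = C ∪ A) : C' = C := by
  ext x
  constructor
  · intro hx
    rcases (h ▸ Set.mem_union_left A hx) with h' | h'
    · exact h'
    · exact absurd (hA h') (hC'R x hx)
  · intro hx
    rcases (h.symm ▸ Set.mem_union_left A hx) with h' | h'
    · exact h'
    · exact absurd (hA h') (hCR x hx)

/-- The new join tree is a component tree. -/
lemma newJT_isComponentTree : (newJT hred JT0 h0).IsComponentTreeFor Ha h0 := by
  constructor
  · -- subtrees ↦ components
    intro h_r h_s hchild
    obtain ⟨hs0, hps⟩ := (isChild_iff hred JT0 h0).1 hchild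
    have hsr : h_s ≠ h_r := hps ▸ Ne.symm (parent_ne hred JT0 h0 hs0)
    have hC := compOf_isComponent hred hsr
    have hsub := subtreeNodes_eq hred JT0 h0 hs0 hps
    have hCdisj : ∀ x ∈ compOf h_r h_s, x ∉ (h_r.1 : Set α) :=
      fun x hx => (hC.2.1 hx).2
    have huniq : ∀ C' : Set α, Ha.IsComponent (h_r.1 : Set α) C' →
        (newJT hred JT0 h0).subtreeNodes h_r h_s =
          C' ∪ ((h_s.1 : Set α) ∩ (h_r.1 : Set α)) → C' = compOf h_r h_s := by
      intro C' hC' heq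
      refine set_cancel (A := ((h_s.1 : Set α) ∩ (h_r.1 : Set α))) (R := (h_r.1 : Set α))
        hCdisj (fun x hx => (hC'.2.1 hx).2) Set.inter_subset_right ?_
      rw [← heq, hsub]
    have hrep_s : rep JT0 h_r (compOf h_r h_s) = h_s := by
      rw [← nxt, ← hps, ← (parent_spec hred JT0 h0 hs0).2]
    constructor
    · refine ⟨compOf h_r h_s, ⟨hC, hsub⟩, ?_⟩
      rintro C' ⟨hC', heq⟩
      exact huniq C' hC' heq
    · intro C' hC' heq
      have hC'eq := huniq C' hC' heq
      subst hC'eq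
      constructor
      · have := rep_meets JT0 h_r hC
        rwa [hrep_s] at this
      · exact edge_subset_fr h_s.2 (compOf_meets_self hred hsr)
  · -- components ↦ subtrees
    intro h_r Ctop hCtop C_r hCr hsubtop
    have htop : h_r = h0 ∨ C_r ⊆ compOf (parent hred JT0 h0 h_r) h_r := by
      rcases hCtop with ⟨hroot, hnodes⟩ | ⟨h_p, hchild', hcomp', heq'⟩
      · exact Or.inl hroot
      · obtain ⟨hr0, hpr⟩ := (isChild_iff hred JT0 h0).1 hchild'
        have hrp : h_r ≠ h_p := hpr ▸ Ne.symm (parent_ne hred JT0 h0 hr0)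
        have hsub' := subtreeNodes_eq hred JT0 h0 hr0 hpr
        have hCtopEq : Ctop = compOf h_p h_r := by
          refine set_cancel (A := ((h_r.1 : Set α) ∩ (h_p.1 : Set α))) (R := (h_p.1 : Set α))
            (fun x hx => ((compOf_isComponent hred hrp).2.1 hx).2)
            (fun x hx => (hcomp'.2.1 hx).2) Set.inter_subset_right ?_
          rw [← heq', hsub']
        right
        rw [hpr]
        exact hCtopEq ▸ hsubtop
    obtain ⟨hpar_s, hs0, hcomp_s, -⟩ := child_of_component hred JT0 h0 hCr htop
    set s := rep JT0 h_r C_r with hsdef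
    refine ⟨s, ⟨(isChild_iff hred JT0 h0).2 ⟨hs0, hpar_s⟩, ?_⟩, ?_⟩
    · rw [subtreeNodes_eq hred JT0 h0 hs0 hpar_s, hcomp_s]
    · rintro s' ⟨hchild', heq'⟩
      obtain ⟨hs'0, hps'⟩ := (isChild_iff hred JT0 h0).1 hchild'
      have hs'r : s' ≠ h_r := hps' ▸ Ne.symm (parent_ne hred JT0 h0 hs'0)
      have hsub'' := subtreeNodes_eq hred JT0 h0 hs'0 hps'
      have hceq : compOf h_r s' = C_r := by
        refine set_cancel (A := ((s'.1 : Set α) ∩ (h_r.1 : Set α))) (R := (h_r.1 : Set α))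
          (fun x hx => (hCr.2.1 hx).2)
          (fun x hx => ((compOf_isComponent hred hs'r).2.1 hx).2)
          Set.inter_subset_right ?_
        rw [← heq', hsub'']
      have : s' = rep JT0 h_r (compOf h_r s') := by
        rw [← nxt, ← hps', ← (parent_spec hred JT0 h0 hs'0).2]
      rw [this, hceq]

end Assembly

end CompTree

theorem reduced_acyclic_has_component_tree {α : Type*} (Ha : FinHypergraph α)
    (hred : Ha.Reduced) (hacyc : Ha.Acyclic) :
    ∀ h : Finset α, ∀ hh : h ∈ Ha.edges,
      ∃ JT : JoinTree Ha, JT.IsComponentTreeFor Ha ⟨h, hh⟩ := by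
  intro h hh
  obtain ⟨JT0⟩ := hacyc
  exact ⟨CompTree.newJT hred JT0 ⟨h, hh⟩, CompTree.newJT_isComponentTree hred JT0 ⟨h, hh⟩⟩
end
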